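/- There exist a constant K > 0 and an integer N such that for all n ≥ N, every binary (n, M, d) code with minimum distance d ≥ n/2 − 2√n satisfies M ≤ K · n^{15/2}. (Quantitatively, for sufficiently large n one has M ≤ (√n / (4.14 − 4)) · Vol(7, n).) -/

import Mathlib

set_option maxHeartbeats 2000000
set_option maxRecDepth 8000
set_option linter.unusedVariables false

namespace UBTSN

lemma zmod2cases : ∀ z : ZMod 2, z = 0 ∨ z = 1 := by decide

noncomputable def EE0 (s m : ℝ) : ℝ := 1
noncomputable def EE1 (s m : ℝ) : ℝ := 1 * s
noncomputable def EE2 (s m : ℝ) : ℝ := (1/2) * s ^ 2 + (-1/2) * m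
noncomputable def EE3 (s m : ℝ) : ℝ := (1/6) * s ^ 3 + (-1/2) * s * m + (1/3) * s
noncomputable def EE4 (s m : ℝ) : ℝ := (1/24) * s ^ 4 + (-1/4) * s ^ 2 * m + (1/3) * s ^ 2 + (1/8) * m ^ 2 + (-1/4) * m
noncomputable def EE5 (s m : ℝ) : ℝ := (1/120) * s ^ 5 + (-1/12) * s ^ 3 * m + (1/6) * s ^ 3 + (1/8) * s * m ^ 2 + (-5/12) * s * m + (1/5) * s
noncomputable def EE6 (s m : ℝ) : ℝ := (1/720) * s ^ 6 + (-1/48) * s ^ 4 * m + (1/18) * s ^ 4 + (1/16) * s ^ 2 * m ^ 2 + (-7/24) * s ^ 2 * m + (23/90) * s ^ 2 + (-1/48) * m ^ 3 + (1/8) * m ^ 2 + (-1/6) * m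
noncomputable def EE7 (s m : ℝ) : ℝ := (1/5040) * s ^ 7 + (-1/240) * s ^ 5 * m + (1/72) * s ^ 5 + (1/48) * s ^ 3 * m ^ 2 + (-1/8) * s ^ 3 * m + (7/45) * s ^ 3 + (-1/48) * s * m ^ 3 + (1/6) * s * m ^ 2 + (-7/20) * s * m + (1/7) * s
noncomputable def EE8 (s m : ℝ) : ℝ := (1/40320) * s ^ 8 + (-1/1440) * s ^ 6 * m + (1/360) * s ^ 6 + (1/192) * s ^ 4 * m ^ 2 + (-11/288) * s ^ 4 * m + (11/180) * s ^ 4 + (-1/96) * s ^ 2 * m ^ 3 + (5/48) * s ^ 2 * m ^ 2 + (-53/180) * s ^ 2 * m + (22/105) * s ^ 2 + (1/384) * m ^ 4 + (-1/32) * m ^ 3 + (11/96) * m ^ 2 + (-1/8) * m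
noncomputable def EE9 (s m : ℝ) : ℝ := (1/362880) * s ^ 9 + (-1/10080) * s ^ 7 * m + (1/2160) * s ^ 7 + (1/960) * s ^ 5 * m ^ 2 + (-13/1440) * s ^ 5 * m + (19/1080) * s ^ 5 + (-1/288) * s ^ 3 * m ^ 3 + (1/24) * s ^ 3 * m ^ 2 + (-53/360) * s ^ 3 * m + (409/2835) * s ^ 3 + (1/384) * s * m ^ 4 + (-11/288) * s * m ^ 3 + (29/160) * s * m ^ 2 + (-761/2520) * s * m + (1/9) * s
noncomputable def EE10 (s m : ℝ) : ℝ := (1/3628800) * s ^ 10 + (-1/80640) * s ^ 8 * m + (1/15120) * s ^ 8 + (1/5760) * s ^ 6 * m ^ 2 + (-1/576) * s ^ 6 * m + (43/10800) * s ^ 6 + (-1/1152) * s ^ 4 * m ^ 3 + (7/576) * s ^ 4 * m ^ 2 + (-37/720) * s ^ 4 * m + (359/5670) * s ^ 4 + (1/768) * s ^ 2 * m ^ 4 + (-13/576) * s ^ 2 * m ^ 3 + (377/2880) * s ^ 2 * m ^ 2 + (-289/1008) * s ^ 2 * m + (563/3150) * s ^ 2 + (-1/3840) * m ^ 5 + (1/192)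 * m ^ 4 + (-7/192) * m ^ 3 + (5/48) * m ^ 2 + (-1/10) * m
noncomputable def EE11 (s m : ℝ) : ℝ := (1/39916800) * s ^ 11 + (-1/725760) * s ^ 9 * m + (1/120960) * s ^ 9 + (1/40320) * s ^ 7 * m ^ 2 + (-17/60480) * s ^ 7 * m + (1/1350) * s ^ 7 + (-1/5760) * s ^ 5 * m ^ 3 + (1/360) * s ^ 5 * m ^ 2 + (-59/4320) * s ^ 5 * m + (457/22680) * s ^ 5 + (1/2304) * s ^ 3 * m ^ 4 + (-5/576) * s ^ 3 * m ^ 3 + (19/320) * s ^ 3 * m ^ 2 + (-7241/45360) * s ^ 3 * m + (47/350) * s ^ 3 + (-1/3840) * s * m ^ 5 + (7/1152) * s * m ^ 4 + (-49/960) * s * m ^ 3 + (1867/10080) * s * m ^ 2 + (-671/2520) * s * m + (1/11) * s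
noncomputable def EE12 (s m : ℝ) : ℝ := (1/479001600) * s ^ 12 + (-1/7257600) * s ^ 10 * m + (1/1088640) * s ^ 10 + (1/322560) * s ^ 8 * m ^ 2 + (-19/483840) * s ^ 8 * m + (53/453600) * s ^ 8 + (-1/34560) * s ^ 6 * m ^ 3 + (1/1920) * s ^ 6 * m ^ 2 + (-7/2400) * s ^ 6 * m + (17/3402) * s ^ 6 + (1/9216) * s ^ 4 * m ^ 4 + (-17/6912) * s ^ 4 * m ^ 3 + (223/11520) * s ^ 4 * m ^ 2 + (-11141/181440) * s ^ 4 * m + (21757/340200) * s ^ 4 + (-1/7680) * s ^ 2 * m ^ 5 + (1/288) * s ^ 2 * m ^ 4 + (-587/17280) * s ^ 2 * m ^ 3 + (187/1260) * s ^ 2 * m ^ 2 + (-10433/37800) * s ^ 2 * m + (1627/10395) * s ^ 2 + (1/46080) * m ^ 6 + (-1/1536) * m ^ 5 + (17/2304) * m ^ 4 + (-5/128) * m ^ 3 + (137/1440) * m ^ 2 + (-1/12) * m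
noncomputable def EE13 (s m : ℝ) : ℝ := (1/6227020800) * s ^ 13 + (-1/79833600) * s ^ 11 * m + (1/10886400) * s ^ 11 + (1/2903040) * s ^ 9 * m ^ 2 + (-1/207360) * s ^ 9 * m + (29/1814400) * s ^ 9 + (-1/241920) * s ^ 7 * m ^ 3 + (1/12096) * s ^ 7 * m ^ 2 + (-157/302400) * s ^ 7 * m + (43/42525) * s ^ 7 + (1/46080) * s ^ 5 * m ^ 4 + (-19/34560) * s ^ 5 * m ^ 3 + (169/34560) * s ^ 5 * m ^ 2 + (-647/36288) * s ^ 5 * m + (3737/170100) * s ^ 5 + (-1/23040) * s ^ 3 * m ^ 5 + (1/768) * s ^ 3 * m ^ 4 + (-251/17280) * s ^ 3 * m ^ 3 + (2683/36288) * s ^ 3 * m ^ 2 + (-5399/32400) * s ^ 3 * m + (13063/103950) * s ^ 3 + (1/46080) * s * m ^ 6 + (-17/23040) * s * m ^ 5 + (37/3840) * s * m ^ 4 + (-2437/40320) * s * m ^ 3 + (31/168) * s * m ^ 2 + (-6617/27720) * s * m + (1/13) * s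
noncomputable def EE14 (s m : ℝ) : ℝ := (1/87178291200) * s ^ 14 + (-1/958003200) * s ^ 12 * m + (1/119750400) * s ^ 12 + (1/29030400) * s ^ 10 * m ^ 2 + (-23/43545600) * s ^ 10 * m + (1/518400) * s ^ 10 + (-1/1935360) * s ^ 8 * m ^ 3 + (11/967680) * s ^ 8 * m ^ 2 + (-41/518400) * s ^ 8 * m + (821/4762800) * s ^ 8 + (1/276480) * s ^ 6 * m ^ 4 + (-7/69120) * s ^ 6 * m ^ 3 + (347/345600) * s ^ 6 * m ^ 2 + (-22483/5443200) * s ^ 6 * m + (1991/340200) * s ^ 6 + (-1/92160) * s ^ 4 * m ^ 5 + (5/13824) * s ^ 4 * m ^ 4 + (-313/69120) * s ^ 4 * m ^ 3 + (9529/362880) * s ^ 4 * m ^ 2 + (-47017/680400) * s ^ 4 * m + (1421/22275) * s ^ 4 + (1/92160) * s ^ 2 * m ^ 6 + (-19/46080) * s ^ 2 * m ^ 5 + (421/69120) * s ^ 2 * m ^ 4 + (-3551/80640) * s ^ 2 * m ^ 3 + (1513/9450) * s ^ 2 * m ^ 2 + (-31459/118800) * s ^ 2 * m + (88069/630630) *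 s ^ 2 + (-1/645120) * m ^ 7 + (1/15360) * m ^ 6 + (-5/4608) * m ^ 5 + (7/768) * m ^ 4 + (-29/720) * m ^ 3 + (7/80) * m ^ 2 + (-1/14) * m
noncomputable def EE15 (s m : ℝ) : ℝ := (1/1307674368000) * s ^ 15 + (-1/12454041600) * s ^ 13 * m + (1/1437004800) * s ^ 13 + (1/319334400) * s ^ 11 * m ^ 2 + (-1/19160064) * s ^ 11 * m + (17/81648000) * s ^ 11 + (-1/17418240) * s ^ 9 * m ^ 3 + (1/725760) * s ^ 9 * m ^ 2 + (-229/21772800) * s ^ 9 * m + (2897/114307200) * s ^ 9 + (1/1935360) * s ^ 7 * m ^ 4 + (-23/1451520) * s ^ 7 * m ^ 3 + (419/2419200) * s ^ 7 * m ^ 2 + (-863/1088640) * s ^ 7 * m + (6463/5103000) * s ^ 7 + (-1/460800) * s ^ 5 * m ^ 5 + (11/138240) * s ^ 5 * m ^ 4 + (-229/207360) * s ^ 5 * m ^ 3 + (5209/725760) * s ^ 5 * m ^ 2 + (-58579/2721600) * s ^ 5 * m + (130751/5613300) * s ^ 5 + (1/276480) * s ^ 3 * m ^ 6 + (-7/46080)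 * s ^ 3 * m ^ 5 + (173/69120) * s ^ 3 * m ^ 4 + (-44533/2177280) * s ^ 3 * m ^ 3 + (77893/907200) * s ^ 3 * m ^ 2 + (-127571/748440) * s ^ 3 * m + (8387282/70945875) * s ^ 3 + (-1/645120) * s * m ^ 7 + (1/13824) * s * m ^ 6 + (-13/9600) * s * m ^ 5 + (1571/120960) * s * m ^ 4 + (-8149/120960) * s * m ^ 3 + (6043/33264) * s * m ^ 2 + (-1171733/5405400) * s * m + (1/15) * s
noncomputable def EE : ℕ → ℝ → ℝ → ℝ
  | 0 => EE0
  | 1 => EE1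
  | 2 => EE2
  | 3 => EE3
  | 4 => EE4
  | 5 => EE5
  | 6 => EE6
  | 7 => EE7
  | 8 => EE8
  | 9 => EE9
  | 10 => EE10
  | 11 => EE11
  | 12 => EE12
  | 13 => EE13
  | 14 => EE14
  | 15 => EE15
  | _+16 => fun _ _ => 0


lemma EE_rec (k : ℕ) (hk : k ≤ 14) (s m e : ℝ) (he : e = 1 ∨ e = -1) :
    EE (k+1) (s+e) (m+1) = EE (k+1) s m + e * EE k s m := by
  rcases he with h | h <;> subst h <;> interval_cases k <;> simp only [EE, EE0, EE1, EE2, EE3, EE4, EE5, EE6, EE7, EE8, EE9, EE10, EE11, EE12, EE13, EE14, EE15] <;> ring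

lemma EE_zero (k : ℕ) (h1 : 1 ≤ k) (h2 : k ≤ 15) : EE k 0 0 = 0 := by
  interval_cases k <;> norm_num [EE, EE0, EE1, EE2, EE3, EE4, EE5, EE6, EE7, EE8, EE9, EE10, EE11, EE12, EE13, EE14, EE15]

lemma esymm_aux {α : Type*} [DecidableEq α] (w : α → ℝ)
    (hw : ∀ i, w i = 1 ∨ w i = -1) :
    ∀ (T : Finset α) (k : ℕ), k ≤ 15 →
      ∑ S ∈ T.powersetCard k, ∏ i ∈ S, w i = EE k (∑ i ∈ T, w i) T.card := by
  intro T
  induction T using Finset.induction_on with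
  | empty =>
    intro k hk
    match k with
    | 0 => simp [EE, EE0, EE1, EE2, EE3, EE4, EE5, EE6, EE7, EE8, EE9, EE10, EE11, EE12, EE13, EE14, EE15]
    | (k+1) =>
      rw [Finset.sum_empty, Finset.card_empty, Nat.cast_zero,
        EE_zero (k+1) (Nat.succ_le_succ (Nat.zero_le k)) hk,
        Finset.powersetCard_eq_empty.mpr (by simp), Finset.sum_empty]
  | @insert a T ha ih =>
    intro k hk
    match k with
    | 0 => simp [EE, EE0, EE1, EE2, EE3, EE4, EE5, EE6, EE7, EE8, EE9, EE10, EE11, EE12, EE13, EE14, EE15]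
    | (k+1) =>
      have hdisj : Disjoint (T.powersetCard (k+1)) ((T.powersetCard k).image (insert a)) := by
        rw [Finset.disjoint_left]
        intro S hS1 hS2
        obtain ⟨hsub, -⟩ := Finset.mem_powersetCard.mp hS1
        obtain ⟨S', hS', rfl⟩ := Finset.mem_image.mp hS2
        exact ha (hsub (Finset.mem_insert_self a S'))
      rw [Finset.powersetCard_succ_insert ha, Finset.sum_union hdisj,
        Finset.sum_image (by
          intro S1 h1 S2 h2 heq
          have n1 : a ∉ S1 := fun hmem => ha ((Finset.mem_powersetCard.mp h1).1 hmem)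
          have n2 : a ∉ S2 := fun hmem => ha ((Finset.mem_powersetCard.mp h2).1 hmem)
          rw [← Finset.erase_insert n1, ← Finset.erase_insert n2, heq])]
      have hprod : ∀ S ∈ T.powersetCard k, ∏ i ∈ insert a S, w i = w a * ∏ i ∈ S, w i := by
        intro S hS
        exact Finset.prod_insert (fun hmem => ha ((Finset.mem_powersetCard.mp hS).1 hmem))
      rw [Finset.sum_congr rfl hprod, ← Finset.mul_sum,
        ih (k+1) hk, ih k (by omega),
        Finset.sum_insert ha, Finset.card_insert_of_notMem ha]
      push_cast
      rw [add_comm (w a) (∑ i ∈ T, w i)]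
      exact (EE_rec k (by omega) _ _ _ (hw a)).symm

noncomputable def aco0 (u : ℝ) : ℝ := 1 * u ^ 14
noncomputable def aco1 (u : ℝ) : ℝ := 4 * u ^ 13
noncomputable def aco2 (u : ℝ) : ℝ := 15 * u ^ 12
noncomputable def aco3 (u : ℝ) : ℝ := 52 * u ^ 11 + 8 * u ^ 9
noncomputable def aco4 (u : ℝ) : ℝ := 163 * u ^ 10 + 122 * u ^ 8
noncomputable def aco5 (u : ℝ) : ℝ := 444 * u ^ 9 + 1080 * u ^ 7 + 96 * u ^ 5
noncomputable def aco6 (u : ℝ) : ℝ := 961 * u ^ 8 + 6970 * u ^ 6 + 2824 * u ^ 4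
noncomputable def aco7 (u : ℝ) : ℝ := 1180 * u ^ 7 + 34720 * u ^ 5 + 43120 * u ^ 3 + 2880 * u
noncomputable def aco : ℕ → ℝ → ℝ
  | 0 => aco0
  | 1 => aco1
  | 2 => aco2
  | 3 => aco3
  | 4 => aco4
  | 5 => aco5
  | 6 => aco6
  | 7 => aco7
  | _+8 => fun _ => 0

noncomputable def hcov0 (u : ℝ) : ℝ := (13157/28) * u ^ 29 + (-319009/12) * u ^ 27 + (-9128279/12) * u ^ 25 + (1023097835/84) * u ^ 23 + (-358595945/6) * u ^ 21 + (241098199/3) * u ^ 19 + (688028114/3) * u ^ 17 + (-2192058880/3) * u ^ 15 + (545984080/3) * u ^ 13 + (21042690752/21) * u ^ 11 + (-595889408) * u ^ 9 + (-114048000) * u ^ 7 + (-33177600/7) * u ^ 5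
noncomputable def hcov1 (u : ℝ) : ℝ := (24640289/5040) * u ^ 28 + (-91218487/720) * u ^ 26 + (-433337129/720) * u ^ 24 + (-15474410489/1680) * u ^ 22 + (25444141589/72) * u ^ 20 + (-93436475461/36) * u ^ 18 + (204286813651/30) * u ^ 16 + (-22860096994/45) * u ^ 14 + (-1073453854232/45) * u ^ 12 + (6299563614304/315) * u ^ 10 + 23243763072 * u ^ 8 + (-20146357760) * u ^ 6 + (-22224476160/7) * u ^ 4 + (-116121600) * u ^ 2
noncomputable def hcov2 (u : ℝ) : ℝ := (1197188/45) * u ^ 27 + (-6710122/9) * u ^ 25 + (-451534396/45) * u ^ 23 + (2257370578/9) * u ^ 21 + (-14566420048/9) * u ^ 19 + (29384792176/9) * u ^ 17 + (293978276096/45) * u ^ 15 + (-320897923168/9) * u ^ 13 + (1340210611712/45) * u ^ 11 + 48912857088 * u ^ 9 + (-60656564224) * u ^ 7 + (-11086848000) * u ^ 5 + (-464486400) * u ^ 3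
noncomputable def hcov3 (u : ℝ) : ℝ := (8591423/60) * u ^ 26 + (-33526381/12) * u ^ 24 + (-934220881/60) * u ^ 22 + (-833860103/12) * u ^ 20 + (51968781049/6) * u ^ 18 + (-248493080087/3) * u ^ 16 + (4067489952914/15) * u ^ 14 + (-173149375960/3) * u ^ 12 + (-17215203566752/15) * u ^ 10 + 701010142464 * u ^ 8 + 1850021352960 * u ^ 6 + 250052659200 * u ^ 4 + 8709120000 * u ^ 2
noncomputable def hcov4 (u : ℝ) : ℝ := 650833 * u ^ 25 + (-14447538) * u ^ 23 + (-585915163/3) * u ^ 21 + (16120592290/3) * u ^ 19 + (-109369030292/3) * u ^ 17 + 65361029464 * u ^ 15 + (680421565184/3) * u ^ 13 + (-2556139880896/3) * u ^ 11 + (-32396872448/3) * u ^ 9 + 1654535842816 * u ^ 7 + 274305945600 * u ^ 5 + 11147673600 * u ^ 3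
noncomputable def hcov5 (u : ℝ) : ℝ := (11898345/4) * u ^ 24 + (-84760465/2) * u ^ 22 + (-5901990235/12) * u ^ 20 + (-1767025445/2) * u ^ 18 + (579518209705/3) * u ^ 16 + (-5297970819890/3) * u ^ 14 + 4345556647080 * u ^ 12 + (18812750656160/3) * u ^ 10 + (-21903263030400) * u ^ 8 + (-26774696140800) * u ^ 6 + (-3456489369600) * u ^ 4 + (-118444032000) * u ^ 2
noncomputable def hcov6 (u : ℝ) : ℝ := 11801860 * u ^ 23 + (-198565852) * u ^ 21 + (-4012760160) * u ^ 19 + 89876842464 * u ^ 17 + (-500175828480) * u ^ 15 + 196508810688 * u ^ 13 + 4818340601600 * u ^ 11 + (-5037725150720) * u ^ 9 + (-13403469465600) * u ^ 7 + (-2102707814400) * u ^ 5 + (-83607552000) * u ^ 3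
noncomputable def hcov7 (u : ℝ) : ℝ := (142706690/3) * u ^ 22 + (-1038259453/3) * u ^ 20 + (-11677209929) * u ^ 18 + (-160064141440/3) * u ^ 16 + (10573398203732/3) * u ^ 14 + (-22539817301344) * u ^ 12 + (18253570798400/3) * u ^ 10 + (468259159343360/3) * u ^ 8 + 148267161262080 * u ^ 6 + 18672062976000 * u ^ 4 + 634023936000 * u ^ 2
noncomputable def hcov8 (u : ℝ) : ℝ := (488765900/3) * u ^ 21 + (-4863525236/3) * u ^ 19 + (-200905426400/3) * u ^ 17 + 1017289659568 * u ^ 15 + (-9367813389568/3) * u ^ 13 + (-27680105880448/3) * u ^ 11 + (87683155130368/3) * u ^ 9 + 47246744832000 * u ^ 7 + 7131182284800 * u ^ 5 + 278691840000 * u ^ 3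
noncomputable def hcov9 (u : ℝ) : ℝ := 578045265 * u ^ 20 + 1400766537 * u ^ 18 + (-170776471560) * u ^ 16 + (-1878238065564) * u ^ 14 + 42917220468960 * u ^ 12 + (-97609880411328) * u ^ 10 + (-478422973593600) * u ^ 8 + (-397299542492160) * u ^ 6 + (-49235442278400) * u ^ 4 + (-1661700096000) * u ^ 2
noncomputable def hcov10 (u : ℝ) : ℝ := 1641618720 * u ^ 19 + (-1532412000) * u ^ 17 + (-741452256960) * u ^ 15 + 6040477645440 * u ^ 13 + 3826645643520 * u ^ 11 + (-64343239818240) * u ^ 9 + (-81389849210880) * u ^ 7 + (-11932965273600) * u ^ 5 + (-459841536000) * u ^ 3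
noncomputable def hcov11 (u : ℝ) : ℝ := 5036327604 * u ^ 18 + 78928696836 * u ^ 16 + (-1157469944928) * u ^ 14 + (-31455282755952) * u ^ 12 + 223492326609024 * u ^ 10 + 725417551516416 * u ^ 8 + 552960260582400 * u ^ 6 + 67742322278400 * u ^ 4 + 2276215603200 * u ^ 2
noncomputable def hcov12 (u : ℝ) : ℝ := 10840593456 * u ^ 17 + 114314587200 * u ^ 15 + (-4190704765632) * u ^ 13 + 5544588234240 * u ^ 11 + 61998023932416 * u ^ 9 + 67391182172160 * u ^ 7 + 9658168565760 * u ^ 5 + 367873228800 * u ^ 3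
noncomputable def hcov13 (u : ℝ) : ℝ := 27818843052 * u ^ 16 + 936283885680 * u ^ 14 + 2602904983536 * u ^ 12 + (-204389831268480) * u ^ 10 + (-536376114962688) * u ^ 8 + (-384987658598400) * u ^ 6 + (-46754448998400) * u ^ 4 + (-1565650944000) * u ^ 2
noncomputable def hcov14 (u : ℝ) : ℝ := 35370603840 * u ^ 15 + 873479967360 * u ^ 13 + (-4167133850880) * u ^ 11 + (-21913702187520) * u ^ 9 + (-21455023349760) * u ^ 7 + (-3018859683840) * u ^ 5 + (-113865523200) * u ^ 3
noncomputable def hcov15 (u : ℝ) : ℝ := 71680752000 * u ^ 14 + 4218230016000 * u ^ 12 + 67296797568000 * u ^ 10 + 154494033408000 * u ^ 8 + 106013875968000 * u ^ 6 + 12786149376000 * u ^ 4 + 426995712000 * u ^ 2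
noncomputable def hco : ℕ → ℝ → ℝ
  | 0 => hcov0
  | 1 => hcov1
  | 2 => hcov2
  | 3 => hcov3
  | 4 => hcov4
  | 5 => hcov5
  | 6 => hcov6
  | 7 => hcov7
  | 8 => hcov8
  | 9 => hcov9
  | 10 => hcov10
  | 11 => hcov11
  | 12 => hcov12
  | 13 => hcov13
  | 14 => hcov14
  | 15 => hcov15
  | _+16 => fun _ => 0

lemma expand (u s : ℝ) :
    (s - 4*u) * (∑ j ∈ Finset.range 8, aco j u * EE j s (u^2))^2
      = ∑ k ∈ Finset.range 16, hco k u * EE k s (u^2) := by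
  simp only [Finset.sum_range_succ, Finset.sum_range_zero, aco, aco0, aco1, aco2, aco3, aco4, aco5, aco6, aco7, hco, hcov0, hcov1, hcov2, hcov3, hcov4, hcov5, hcov6, hcov7, hcov8, hcov9, hcov10, hcov11, hcov12, hcov13, hcov14, hcov15, EE, EE0, EE1, EE2, EE3, EE4, EE5, EE6, EE7, EE8, EE9, EE10, EE11, EE12, EE13, EE14, EE15]
  ring

lemma h0_pos (u : ℝ) (hu : 10 ≤ u) : 0 < hco 0 u := by
  have ht : (0:ℝ) ≤ u - 10 := by linarith
  have e : hco 0 u = 13957336702714678906552320000000 + (48152051234097256580136960000000 * (u - 10) ^ 1 + 77603039344976934704996352000000 * (u - 10) ^ 2 + (549660122747479884963913318400000/7) * (u - 10) ^ 3 + (394586649454710828001237995520000/7) * (u - 10) ^ 4 + (214879134779831942422578690662400/7) * (u - 10) ^ 5 + (39672731627338834690383682304000/3) * (u - 10) ^ 6 + (13910257052717419684382401049600/3) * (u - 10) ^ 7 + (4050714779624238729637059299840/3) * (u - 10) ^ 8 + (6960242180112268255842689458432/21) * (u - 10) ^ 9 + (485402587620321023410738714240/7) * (u - 10) ^ 10 +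 (261832250644438184750437458752/21) * (u - 10) ^ 11 + 1938490045439182606083576800 * (u - 10) ^ 12 + 261746851744117603602981360 * (u - 10) ^ 13 + (92348417935297080605888000/3) * (u - 10) ^ 14 + (22106179005128348284906880/7) * (u - 10) ^ 15 + (1978923155290749047674220/7) * (u - 10) ^ 16 + (66185315247461321856014/3) * (u - 10) ^ 17 + 1497491266072442119270 * (u - 10) ^ 18 + 88084079470762287733 * (u - 10) ^ 19 + (13397654072278739525/3) * (u - 10) ^ 20 + (2712076556528397045/14) * (u - 10) ^ 21 + (14235267290990525/2) * (u - 10) ^ 22 + (18355695948007835/84) * (u - 10) ^ 23 + (33013584052625/6) * (u - 10) ^ 24 + (1328044685821/12) * (u - 10) ^ 25 + (3419621595/2) * (u - 10) ^ 26 + (228612791/12) * (u - 10) ^ 27 + (1907765/14) * (u - 10) ^ 28 + (13157/28) * (u - 10) ^ 29) := by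
    simp only [hco, hcov0, hcov1, hcov2, hcov3, hcov4, hcov5, hcov6, hcov7, hcov8, hcov9, hcov10, hcov11, hcov12, hcov13, hcov14, hcov15]; ring
  have hrest : (0:ℝ) ≤ 48152051234097256580136960000000 * (u - 10) ^ 1 + 77603039344976934704996352000000 * (u - 10) ^ 2 + (549660122747479884963913318400000/7) * (u - 10) ^ 3 + (394586649454710828001237995520000/7) * (u - 10) ^ 4 + (214879134779831942422578690662400/7) * (u - 10) ^ 5 + (39672731627338834690383682304000/3) * (u - 10) ^ 6 + (13910257052717419684382401049600/3) * (u - 10) ^ 7 + (4050714779624238729637059299840/3) * (u - 10) ^ 8 + (6960242180112268255842689458432/21) * (u - 10) ^ 9 + (485402587620321023410738714240/7) * (u - 10) ^ 10 + (261832250644438184750437458752/21) * (u - 10) ^ 11 + 1938490045439182606083576800 * (u - 10) ^ 12 + 261746851744117603602981360 * (u - 10) ^ 13 + (92348417935297080605888000/3) * (u - 10) ^ 14 + (22106179005128348284906880/7) * (u - 10) ^ 15 + (1978923155290749047674220/7) * (u - 10) ^ 16 + (66185315247461321856014/3) * (u - 10) ^ 17 + 1497491266072442119270 * (u - 10) ^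 18 + 88084079470762287733 * (u - 10) ^ 19 + (13397654072278739525/3) * (u - 10) ^ 20 + (2712076556528397045/14) * (u - 10) ^ 21 + (14235267290990525/2) * (u - 10) ^ 22 + (18355695948007835/84) * (u - 10) ^ 23 + (33013584052625/6) * (u - 10) ^ 24 + (1328044685821/12) * (u - 10) ^ 25 + (3419621595/2) * (u - 10) ^ 26 + (228612791/12) * (u - 10) ^ 27 + (1907765/14) * (u - 10) ^ 28 + (13157/28) * (u - 10) ^ 29 := by
    repeat' apply add_nonneg
    all_goals exact mul_nonneg (by norm_num) (pow_nonneg ht _)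
  rw [e]; linarith

lemma hp1 (u : ℝ) (hu : 10 ≤ u) : 0 ≤ hco 1 u := by
  have ht : (0:ℝ) ≤ u - 10 := by linarith
  have e : hco 1 u = 35559072935217265676661719040000 + (102369502264327310335367938048000 * (u - 10) ^ 1 + 141816512066717379017489909350400 * (u - 10) ^ 2 + (881300479489124579790770796953600/7) * (u - 10) ^ 3 + (1689872041154827872772509271531520/21) * (u - 10) ^ 4 + (118319793899296538118439588659200/3) * (u - 10) ^ 5 + (46245660556136099962426885611520/3) * (u - 10) ^ 6 + (44398710350169799521910621859840/9) * (u - 10) ^ 7 + (11852369174520559107746043912448/9) * (u - 10) ^ 8 + (18727508111447096232549930510080/63) * (u - 10) ^ 9 + (6017052659431181817060854171968/105) * (u - 10) ^ 10 + (85537362276006507470713375232/9) * (u - 10) ^ 11 + (20448973587402870468901933456/15) * (u - 10) ^ 12 + (1527492608621507692214452168/9) * (u - 10) ^ 13 + (826971683061105679614871006/45) * (u - 10) ^ 14 + (12122883114540385349164304/7) * (u - 10) ^ 15 + (12776024508518876076245203/90) * (u - 10) ^ 16 + (90905829028754509469255/9) * (u - 10) ^ 17 + (7460487467624032637513/12)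 * (u - 10) ^ 18 + (296383574130728235475/9) * (u - 10) ^ 19 + (107301836042594003479/72) * (u - 10) ^ 20 + (4792408028160723421/84) * (u - 10) ^ 21 + (9187438564057945733/5040) * (u - 10) ^ 22 + (429471171111113/9) * (u - 10) ^ 23 + (239254473028457/240) * (u - 10) ^ 24 + (575396922269/36) * (u - 10) ^ 25 + (132966342113/720) * (u - 10) ^ 26 + (24640289/18) * (u - 10) ^ 27 + (24640289/5040) * (u - 10) ^ 28) := by
    simp only [hco, hcov0, hcov1, hcov2, hcov3, hcov4, hcov5, hcov6, hcov7, hcov8, hcov9, hcov10, hcov11, hcov12, hcov13, hcov14, hcov15]; ring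
  have hrest : (0:ℝ) ≤ 102369502264327310335367938048000 * (u - 10) ^ 1 + 141816512066717379017489909350400 * (u - 10) ^ 2 + (881300479489124579790770796953600/7) * (u - 10) ^ 3 + (1689872041154827872772509271531520/21) * (u - 10) ^ 4 + (118319793899296538118439588659200/3) * (u - 10) ^ 5 + (46245660556136099962426885611520/3) * (u - 10) ^ 6 + (44398710350169799521910621859840/9) * (u - 10) ^ 7 + (11852369174520559107746043912448/9) * (u - 10) ^ 8 + (18727508111447096232549930510080/63) * (u - 10) ^ 9 + (6017052659431181817060854171968/105) * (u - 10) ^ 10 + (85537362276006507470713375232/9) * (u - 10) ^ 11 + (20448973587402870468901933456/15) * (u - 10) ^ 12 + (1527492608621507692214452168/9) * (u - 10) ^ 13 + (826971683061105679614871006/45) * (u - 10) ^ 14 + (12122883114540385349164304/7) * (u - 10) ^ 15 + (12776024508518876076245203/90) * (u - 10) ^ 16 + (90905829028754509469255/9) * (u - 10) ^ 17 + (7460487467624032637513/12) * (u - 10) ^ 18 + (296383574130728235475/9) * (u - 10) ^ 19 + (107301836042594003479/72) * (u - 10) ^ 20 + (4792408028160723421/84) * (u - 10) ^ 21 + (9187438564057945733/5040)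 * (u - 10) ^ 22 + (429471171111113/9) * (u - 10) ^ 23 + (239254473028457/240) * (u - 10) ^ 24 + (575396922269/36) * (u - 10) ^ 25 + (132966342113/720) * (u - 10) ^ 26 + (24640289/18) * (u - 10) ^ 27 + (24640289/5040) * (u - 10) ^ 28 := by
    repeat' apply add_nonneg
    all_goals exact mul_nonneg (by norm_num) (pow_nonneg ht _)
  rw [e]; linarith

lemma hp2 (u : ℝ) (hu : 10 ≤ u) : 0 ≤ hco 2 u := by
  have ht : (0:ℝ) ≤ u - 10 := by linarith
  have e : hco 2 u = 18380043616739171821656473600000 + (51380742609249416540243886080000 * (u - 10) ^ 1 + 68974458174716551380932395008000 * (u - 10) ^ 2 + (177630667985579131482055003340800/3) * (u - 10) ^ 3 + 36514283838752858862844098560000 * (u - 10) ^ 4 + (51683652726345647731555707084800/3) * (u - 10) ^ 5 + (58199255511893792154091661946880/9) * (u - 10) ^ 6 + (17841348395906873185113302493184/9) * (u - 10) ^ 7 + (4550149696376639522173399137280/9) * (u - 10) ^ 8 + (978386351322043887309333396992/9) * (u - 10) ^ 9 + (59702571943312829661804389888/3) * (u - 10) ^ 10 + (140562017646915800072797459712/45)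 * (u - 10) ^ 11 + 422427692858308855407058240 * (u - 10) ^ 12 + (148129614729523264978226144/3) * (u - 10) ^ 13 + (44964952414571896613562880/9) * (u - 10) ^ 14 + (2188169994607938122649344/5) * (u - 10) ^ 15 + (99416934356644405452640/3) * (u - 10) ^ 16 + (19464906958983092871376/9) * (u - 10) ^ 17 + (363215233027809616960/3) * (u - 10) ^ 18 + 5773403454651395328 * (u - 10) ^ 19 + (2090467381658758180/9) * (u - 10) ^ 20 + (23341603678775606/3) * (u - 10) ^ 21 + 213058410401976 * (u - 10) ^ 22 + (209099524165604/45) * (u - 10) ^ 23 + (698677449500/9) * (u - 10) ^ 24 + (8397549638/9) * (u - 10) ^ 25 + 7183128 * (u - 10) ^ 26 + (1197188/45) * (u - 10) ^ 27) := by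
    simp only [hco, hcov0, hcov1, hcov2, hcov3, hcov4, hcov5, hcov6, hcov7, hcov8, hcov9, hcov10, hcov11, hcov12, hcov13, hcov14, hcov15]; ring
  have hrest : (0:ℝ) ≤ 51380742609249416540243886080000 * (u - 10) ^ 1 + 68974458174716551380932395008000 * (u - 10) ^ 2 + (177630667985579131482055003340800/3) * (u - 10) ^ 3 + 36514283838752858862844098560000 * (u - 10) ^ 4 + (51683652726345647731555707084800/3) * (u - 10) ^ 5 + (58199255511893792154091661946880/9) * (u - 10) ^ 6 + (17841348395906873185113302493184/9) * (u - 10) ^ 7 + (4550149696376639522173399137280/9) * (u - 10) ^ 8 + (978386351322043887309333396992/9) * (u - 10) ^ 9 + (59702571943312829661804389888/3) * (u - 10) ^ 10 + (140562017646915800072797459712/45) * (u - 10) ^ 11 + 422427692858308855407058240 * (u - 10) ^ 12 + (148129614729523264978226144/3) * (u - 10) ^ 13 + (44964952414571896613562880/9) * (u - 10) ^ 14 + (2188169994607938122649344/5) * (u - 10) ^ 15 + (99416934356644405452640/3) * (u - 10) ^ 16 + (19464906958983092871376/9) * (u - 10) ^ 17 + (363215233027809616960/3) * (u - 10) ^ 18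 + 5773403454651395328 * (u - 10) ^ 19 + (2090467381658758180/9) * (u - 10) ^ 20 + (23341603678775606/3) * (u - 10) ^ 21 + 213058410401976 * (u - 10) ^ 22 + (209099524165604/45) * (u - 10) ^ 23 + (698677449500/9) * (u - 10) ^ 24 + (8397549638/9) * (u - 10) ^ 25 + 7183128 * (u - 10) ^ 26 + (1197188/45) * (u - 10) ^ 27 := by
    repeat' apply add_nonneg
    all_goals exact mul_nonneg (by norm_num) (pow_nonneg ht _)
  rw [e]; linarith

lemma hp3 (u : ℝ) (hu : 10 ≤ u) : 0 ≤ hco 3 u := by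
  have ht : (0:ℝ) ≤ u - 10 := by linarith
  have e : hco 3 u = 11370381136361255265828864000000 + (30182081362364435593425715200000 * (u - 10) ^ 1 + 38465211828899510167606640640000 * (u - 10) ^ 2 + 31333625464409412816126803968000 * (u - 10) ^ 3 + 18323439831514611560383278899200 * (u - 10) ^ 4 + 8190185174915748908097915801600 * (u - 10) ^ 5 + (8726689589470242008205024916480/3) * (u - 10) ^ 6 + 842526882647889661034165381120 * (u - 10) ^ 7 + (607955179451315445969966750592/3) * (u - 10) ^ 8 + (123028067999890792785094024960/3) * (u - 10) ^ 9 + (105716783931804047286078893248/15) * (u - 10) ^ 10 + (3106396750065242695525424000/3) * (u - 10) ^ 11 + (391897585177858362049527520/3) * (u - 10) ^ 12 + (42562435672292653861561592/3) * (u - 10) ^ 13 + (19913918942999608333232914/15) * (u - 10) ^ 14 + (320854609389007220378080/3) * (u - 10) ^ 15 + (22197744146493706707263/3) * (u - 10) ^ 16 + (1313084258472099669410/3) * (u - 10) ^ 17 + (131958553589265287549/6) * (u - 10) ^ 18 + (2790021915548557850/3) * (u - 10) ^ 19 + (392033833278609677/12) * (u - 10) ^ 20 + (2808744399484309/3) *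 (u - 10) ^ 21 + (1279790163701119/60) * (u - 10) ^ 22 + (1114873407140/3) * (u - 10) ^ 23 + (18603574373/4) * (u - 10) ^ 24 + (111688499/3) * (u - 10) ^ 25 + (8591423/60) * (u - 10) ^ 26) := by
    simp only [hco, hcov0, hcov1, hcov2, hcov3, hcov4, hcov5, hcov6, hcov7, hcov8, hcov9, hcov10, hcov11, hcov12, hcov13, hcov14, hcov15]; ring
  have hrest : (0:ℝ) ≤ 30182081362364435593425715200000 * (u - 10) ^ 1 + 38465211828899510167606640640000 * (u - 10) ^ 2 + 31333625464409412816126803968000 * (u - 10) ^ 3 + 18323439831514611560383278899200 * (u - 10) ^ 4 + 8190185174915748908097915801600 * (u - 10) ^ 5 + (8726689589470242008205024916480/3) * (u - 10) ^ 6 + 842526882647889661034165381120 * (u - 10) ^ 7 + (607955179451315445969966750592/3) * (u - 10) ^ 8 + (123028067999890792785094024960/3) * (u - 10) ^ 9 + (105716783931804047286078893248/15) * (u - 10) ^ 10 + (3106396750065242695525424000/3) * (u - 10) ^ 11 + (391897585177858362049527520/3) * (u - 10) ^ 12 + (42562435672292653861561592/3) * (u - 10) ^ 13 + (19913918942999608333232914/15)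 * (u - 10) ^ 14 + (320854609389007220378080/3) * (u - 10) ^ 15 + (22197744146493706707263/3) * (u - 10) ^ 16 + (1313084258472099669410/3) * (u - 10) ^ 17 + (131958553589265287549/6) * (u - 10) ^ 18 + (2790021915548557850/3) * (u - 10) ^ 19 + (392033833278609677/12) * (u - 10) ^ 20 + (2808744399484309/3) * (u - 10) ^ 21 + (1279790163701119/60) * (u - 10) ^ 22 + (1114873407140/3) * (u - 10) ^ 23 + (18603574373/4) * (u - 10) ^ 24 + (111688499/3) * (u - 10) ^ 25 + (8591423/60) * (u - 10) ^ 26 := by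
    repeat' apply add_nonneg
    all_goals exact mul_nonneg (by norm_num) (pow_nonneg ht _)
  rw [e]; linarith

lemma hp4 (u : ℝ) (hu : 10 ≤ u) : 0 ≤ hco 4 u := by
  have ht : (0:ℝ) ≤ u - 10 := by linarith
  have e : hco 4 u = 4918428362859392426154393600000 + (12633751048334512572286894080000 * (u - 10) ^ 1 + 15546621936560461172610039808000 * (u - 10) ^ 2 + 12200365153557949166585534873600 * (u - 10) ^ 3 + 6856787110482359658139914240000 * (u - 10) ^ 4 + (8814037915914927934306291097600/3) * (u - 10) ^ 5 + (2992790419991196844935286159360/3) * (u - 10) ^ 6 + (826286937234588744675653915648/3) * (u - 10) ^ 7 + (188852837991130406948314439680/3) * (u - 10) ^ 8 + 12063186772934413046427933184 * (u - 10) ^ 9 + (5867184332755114468213325440/3) * (u - 10) ^ 10 + 269919394891049064275784768 * (u - 10) ^ 11 + (95511383223743610532233920/3) * (u - 10) ^ 12 + 3215408144916505726693728 * (u - 10) ^ 13 + (834225122056990276698800/3) * (u - 10) ^ 14 + (61666186514849799517192/3) * (u - 10) ^ 15 + (3881472515817025160360/3) * (u - 10) ^ 16 + (206767312267295578708/3)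 * (u - 10) ^ 17 + 3079680975632381700 * (u - 10) ^ 18 + (341937296332469290/3) * (u - 10) ^ 19 + 3432248125140590 * (u - 10) ^ 20 + (245893969450637/3) * (u - 10) ^ 21 + 1493592966260 * (u - 10) ^ 22 + 19510542462 * (u - 10) ^ 23 + 162708250 * (u - 10) ^ 24 + 650833 * (u - 10) ^ 25) := by
    simp only [hco, hcov0, hcov1, hcov2, hcov3, hcov4, hcov5, hcov6, hcov7, hcov8, hcov9, hcov10, hcov11, hcov12, hcov13, hcov14, hcov15]; ring
  have hrest : (0:ℝ) ≤ 12633751048334512572286894080000 * (u - 10) ^ 1 + 15546621936560461172610039808000 * (u - 10) ^ 2 + 12200365153557949166585534873600 * (u - 10) ^ 3 + 6856787110482359658139914240000 * (u - 10) ^ 4 + (8814037915914927934306291097600/3) * (u - 10) ^ 5 + (2992790419991196844935286159360/3) * (u - 10) ^ 6 + (826286937234588744675653915648/3) * (u - 10) ^ 7 + (188852837991130406948314439680/3) * (u - 10) ^ 8 + 12063186772934413046427933184 * (u - 10) ^ 9 + (5867184332755114468213325440/3) * (u - 10) ^ 10 + 269919394891049064275784768 * (u - 10) ^ 11 + (95511383223743610532233920/3)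 * (u - 10) ^ 12 + 3215408144916505726693728 * (u - 10) ^ 13 + (834225122056990276698800/3) * (u - 10) ^ 14 + (61666186514849799517192/3) * (u - 10) ^ 15 + (3881472515817025160360/3) * (u - 10) ^ 16 + (206767312267295578708/3) * (u - 10) ^ 17 + 3079680975632381700 * (u - 10) ^ 18 + (341937296332469290/3) * (u - 10) ^ 19 + 3432248125140590 * (u - 10) ^ 20 + (245893969450637/3) * (u - 10) ^ 21 + 1493592966260 * (u - 10) ^ 22 + 19510542462 * (u - 10) ^ 23 + 162708250 * (u - 10) ^ 24 + 650833 * (u - 10) ^ 25 := by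
    repeat' apply add_nonneg
    all_goals exact mul_nonneg (by norm_num) (pow_nonneg ht _)
  rw [e]; linarith

lemma hp5 (u : ℝ) (hu : 10 ≤ u) : 0 ≤ hco 5 u := by
  have ht : (0:ℝ) ≤ u - 10 := by linarith
  have e : hco 5 u = 2502476694706200691281100800000 + (6109533858938470794757160960000 * (u - 10) ^ 1 + 7138234989456895083755614208000 * (u - 10) ^ 2 + 5312135584589143382911369216000 * (u - 10) ^ 3 + (8481055263810285881407658291200/3) * (u - 10) ^ 4 + (3435281524779689007741619456000/3) * (u - 10) ^ 5 + (1100515339883870227783152217600/3) * (u - 10) ^ 6 + (286025984843069767217019904000/3) * (u - 10) ^ 7 + 20459927125677851310877209600 * (u - 10) ^ 8 + (11010580916092411922160416000/3) * (u - 10) ^ 9 + (1665229434964053748403940160/3) * (u - 10) ^ 10 + (213532540090140945896988800/3) * (u - 10) ^ 11 + 7763486661101317873314080 * (u - 10) ^ 12 + (2163110607475386606015400/3) * (u - 10) ^ 13 + (170894911383017970140110/3) * (u - 10) ^ 14 + (11448729747984282872800/3) * (u - 10) ^ 15 + (646758700469120309455/3) * (u - 10) ^ 16 + 10182997042329884950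 * (u - 10) ^ 17 + (2383547707177441165/6) * (u - 10) ^ 18 + (37733452417338250/3) * (u - 10) ^ 19 + (3781200716660765/12) * (u - 10) ^ 20 + 6011238918850 * (u - 10) ^ 21 + (164112400535/2) * (u - 10) ^ 22 + 713900700 * (u - 10) ^ 23 + (11898345/4) * (u - 10) ^ 24) := by
    simp only [hco, hcov0, hcov1, hcov2, hcov3, hcov4, hcov5, hcov6, hcov7, hcov8, hcov9, hcov10, hcov11, hcov12, hcov13, hcov14, hcov15]; ring
  have hrest : (0:ℝ) ≤ 6109533858938470794757160960000 * (u - 10) ^ 1 + 7138234989456895083755614208000 * (u - 10) ^ 2 + 5312135584589143382911369216000 * (u - 10) ^ 3 + (8481055263810285881407658291200/3) * (u - 10) ^ 4 + (3435281524779689007741619456000/3) * (u - 10) ^ 5 + (1100515339883870227783152217600/3) * (u - 10) ^ 6 + (286025984843069767217019904000/3) * (u - 10) ^ 7 + 20459927125677851310877209600 * (u - 10) ^ 8 + (11010580916092411922160416000/3) * (u - 10) ^ 9 + (1665229434964053748403940160/3) * (u - 10) ^ 10 + (213532540090140945896988800/3) * (u - 10) ^ 11 + 7763486661101317873314080 *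 (u - 10) ^ 12 + (2163110607475386606015400/3) * (u - 10) ^ 13 + (170894911383017970140110/3) * (u - 10) ^ 14 + (11448729747984282872800/3) * (u - 10) ^ 15 + (646758700469120309455/3) * (u - 10) ^ 16 + 10182997042329884950 * (u - 10) ^ 17 + (2383547707177441165/6) * (u - 10) ^ 18 + (37733452417338250/3) * (u - 10) ^ 19 + (3781200716660765/12) * (u - 10) ^ 20 + 6011238918850 * (u - 10) ^ 21 + (164112400535/2) * (u - 10) ^ 22 + 713900700 * (u - 10) ^ 23 + (11898345/4) * (u - 10) ^ 24 := by
    repeat' apply add_nonneg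
    all_goals exact mul_nonneg (by norm_num) (pow_nonneg ht _)
  rw [e]; linarith

lemma hp6 (u : ℝ) (hu : 10 ≤ u) : 0 ≤ hco 6 u := by
  have ht : (0:ℝ) ≤ u - 10 := by linarith
  have e : hco 6 u = 949982496568116840235008000000 + (2235728947240283037619814400000 * (u - 10) ^ 1 + 2511963953954907084676669440000 * (u - 10) ^ 2 + 1793017863265149864315138048000 * (u - 10) ^ 3 + 912730533388274743734241280000 * (u - 10) ^ 4 + 352589749533891588006307225600 * (u - 10) ^ 5 + 107381248456947124044476928000 * (u - 10) ^ 6 + 26439124972470185751875942400 * (u - 10) ^ 7 + 5354379033774881891546035200 * (u - 10) ^ 8 + 902580817536577473602849280 * (u - 10) ^ 9 + 127663970666388963498944000 * (u - 10) ^ 10 + 15227437980638230775968000 * (u - 10) ^ 11 + 1535372504275880110189440 * (u - 10) ^ 12 + 130873710713791832970688 * (u - 10) ^ 13 + 9408864604406853248000 * (u - 10) ^ 14 + 567732428252152081920 * (u - 10) ^ 15 + 28525151182433378880 * (u - 10) ^ 16 + 1179409666855906464 * (u - 10) ^ 17 + 39447223706409600 * (u - 10) ^ 18 + 1040880807347840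 * (u - 10) ^ 19 + 20859395231080 * (u - 10) ^ 20 + 298388492148 * (u - 10) ^ 21 + 2714427800 * (u - 10) ^ 22 + 11801860 * (u - 10) ^ 23) := by
    simp only [hco, hcov0, hcov1, hcov2, hcov3, hcov4, hcov5, hcov6, hcov7, hcov8, hcov9, hcov10, hcov11, hcov12, hcov13, hcov14, hcov15]; ring
  have hrest : (0:ℝ) ≤ 2235728947240283037619814400000 * (u - 10) ^ 1 + 2511963953954907084676669440000 * (u - 10) ^ 2 + 1793017863265149864315138048000 * (u - 10) ^ 3 + 912730533388274743734241280000 * (u - 10) ^ 4 + 352589749533891588006307225600 * (u - 10) ^ 5 + 107381248456947124044476928000 * (u - 10) ^ 6 + 26439124972470185751875942400 * (u - 10) ^ 7 + 5354379033774881891546035200 * (u - 10) ^ 8 + 902580817536577473602849280 * (u - 10) ^ 9 + 127663970666388963498944000 * (u - 10) ^ 10 + 15227437980638230775968000 * (u - 10) ^ 11 + 1535372504275880110189440 * (u - 10) ^ 12 + 130873710713791832970688 * (u - 10) ^ 13 + 9408864604406853248000 * (u - 10) ^ 14 + 567732428252152081920 * (u - 10) ^ 15 + 28525151182433378880 * (u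 - 10) ^ 16 + 1179409666855906464 * (u - 10) ^ 17 + 39447223706409600 * (u - 10) ^ 18 + 1040880807347840 * (u - 10) ^ 19 + 20859395231080 * (u - 10) ^ 20 + 298388492148 * (u - 10) ^ 21 + 2714427800 * (u - 10) ^ 22 + 11801860 * (u - 10) ^ 23 := by
    repeat' apply add_nonneg
    all_goals exact mul_nonneg (by norm_num) (pow_nonneg ht _)
  rw [e]; linarith

lemma hp7 (u : ℝ) (hu : 10 ≤ u) : 0 ≤ hco 7 u := by
  have ht : (0:ℝ) ≤ u - 10 := by linarith
  have e : hco 7 u = 429199544558018307406233600000 + (955892227396714455379230720000 * (u - 10) ^ 1 + 1014884575125323946492481536000 * (u - 10) ^ 2 + 683403099736791826162032640000 * (u - 10) ^ 3 + 327562422704918615060740096000 * (u - 10) ^ 4 + 118885276570980274887498444800 * (u - 10) ^ 5 + (101793416608810707318317194240/3) * (u - 10) ^ 6 + 7806650914925276037153689600 * (u - 10) ^ 7 + (4417038557004489469989743360/3) * (u - 10) ^ 8 + (690693564367253649339200000/3) * (u - 10) ^ 9 + (90207995820934604241507200/3) * (u - 10) ^ 10 + 3293795325001445352654720 * (u - 10)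 ^ 11 + (909075004095523126057168/3) * (u - 10) ^ 12 + 23383399918596480174160 * (u - 10) ^ 13 + (4522015011663938723732/3) * (u - 10) ^ 14 + (241739368517499977600/3) * (u - 10) ^ 15 + (10596934446472267460/3) * (u - 10) ^ 16 + 124871291992072780 * (u - 10) ^ 17 + (10419232412263213/3) * (u - 10) ^ 18 + 73186883569800 * (u - 10) ^ 19 + (3295486279547/3) * (u - 10) ^ 20 + (31395471800/3) * (u - 10) ^ 21 + (142706690/3) * (u - 10) ^ 22) := by
    simp only [hco, hcov0, hcov1, hcov2, hcov3, hcov4, hcov5, hcov6, hcov7, hcov8, hcov9, hcov10, hcov11, hcov12, hcov13, hcov14, hcov15]; ring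
  have hrest : (0:ℝ) ≤ 955892227396714455379230720000 * (u - 10) ^ 1 + 1014884575125323946492481536000 * (u - 10) ^ 2 + 683403099736791826162032640000 * (u - 10) ^ 3 + 327562422704918615060740096000 * (u - 10) ^ 4 + 118885276570980274887498444800 * (u - 10) ^ 5 + (101793416608810707318317194240/3) * (u - 10) ^ 6 + 7806650914925276037153689600 * (u - 10) ^ 7 + (4417038557004489469989743360/3) * (u - 10) ^ 8 + (690693564367253649339200000/3) * (u - 10) ^ 9 + (90207995820934604241507200/3) * (u - 10) ^ 10 + 3293795325001445352654720 * (u - 10) ^ 11 + (909075004095523126057168/3) * (u - 10) ^ 12 + 23383399918596480174160 * (u - 10) ^ 13 + (4522015011663938723732/3) * (u - 10) ^ 14 + (241739368517499977600/3) * (u - 10) ^ 15 + (10596934446472267460/3) * (u - 10) ^ 16 + 124871291992072780 * (u - 10) ^ 17 + (10419232412263213/3) * (u - 10) ^ 18 + 73186883569800 * (u - 10) ^ 19 + (3295486279547/3) * (u - 10) ^ 20 + (31395471800/3) * (u - 10) ^ 21 + (142706690/3) * (u - 10) ^ 22 := by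
    repeat' apply add_nonneg
    all_goals exact mul_nonneg (by norm_num) (pow_nonneg ht _)
  rw [e]; linarith

lemma hp8 (u : ℝ) (hu : 10 ≤ u) : 0 ≤ hco 8 u := by
  have ht : (0:ℝ) ≤ u - 10 := by linarith
  have e : hco 8 u = 140998538978972647096320000000 + (301433515006145317896192000000 * (u - 10) ^ 1 + 306349624471727148294963200000 * (u - 10) ^ 2 + 196876959200081545178480640000 * (u - 10) ^ 3 + 89767870027127960642979840000 * (u - 10) ^ 4 + (92650892378432778301676134400/3) * (u - 10) ^ 5 + (24969293155970903703788032000/3) * (u - 10) ^ 6 + (5401182199773631218537420800/3) * (u - 10) ^ 7 + (953141400127351178686213120/3) * (u - 10) ^ 8 + 46232313341709766307155456 * (u - 10) ^ 9 + (16752114290877383747902720/3) * (u - 10) ^ 10 + 561583738254357721696384 * (u - 10) ^ 11 + (141089394995797569676160/3) * (u - 10) ^ 12 + 3269730206168330334144 * (u - 10) ^ 13 + (562545523465974005600/3) * (u - 10) ^ 14 + (26331153297522578704/3) * (u - 10) ^ 15 + (989842820033828000/3) * (u - 10) ^ 16 + (29169271928038000/3) * (u - 10) ^ 17 + 216378192401720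 * (u - 10) ^ 18 + (10259220374764/3) * (u - 10) ^ 19 + 34213613000 * (u - 10) ^ 20 + (488765900/3) * (u - 10) ^ 21) := by
    simp only [hco, hcov0, hcov1, hcov2, hcov3, hcov4, hcov5, hcov6, hcov7, hcov8, hcov9, hcov10, hcov11, hcov12, hcov13, hcov14, hcov15]; ring
  have hrest : (0:ℝ) ≤ 301433515006145317896192000000 * (u - 10) ^ 1 + 306349624471727148294963200000 * (u - 10) ^ 2 + 196876959200081545178480640000 * (u - 10) ^ 3 + 89767870027127960642979840000 * (u - 10) ^ 4 + (92650892378432778301676134400/3) * (u - 10) ^ 5 + (24969293155970903703788032000/3) * (u - 10) ^ 6 + (5401182199773631218537420800/3) * (u - 10) ^ 7 + (953141400127351178686213120/3) * (u - 10) ^ 8 + 46232313341709766307155456 * (u - 10) ^ 9 + (16752114290877383747902720/3) * (u - 10) ^ 10 + 561583738254357721696384 * (u - 10) ^ 11 + (141089394995797569676160/3) * (u - 10) ^ 12 + 3269730206168330334144 * (u - 10) ^ 13 + (562545523465974005600/3) * (u - 10) ^ 14 + (26331153297522578704/3) * (u - 10) ^ 15 + (989842820033828000/3) * (u - 10) ^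 16 + (29169271928038000/3) * (u - 10) ^ 17 + 216378192401720 * (u - 10) ^ 18 + (10259220374764/3) * (u - 10) ^ 19 + 34213613000 * (u - 10) ^ 20 + (488765900/3) * (u - 10) ^ 21 := by
    repeat' apply add_nonneg
    all_goals exact mul_nonneg (by norm_num) (pow_nonneg ht _)
  rw [e]; linarith

lemma hp9 (u : ℝ) (hu : 10 ≤ u) : 0 ≤ hco 9 u := by
  have ht : (0:ℝ) ≤ u - 10 := by linarith
  have e : hco 9 u = 57351597396419024275046400000 + (115185541945805090733588480000 * (u - 10) ^ 1 + 109779408494503603702308864000 * (u - 10) ^ 2 + 66024791567399535614705664000 * (u - 10) ^ 3 + 28107416877142751436419481600 * (u - 10) ^ 4 + 9004013487867096175943270400 * (u - 10) ^ 5 + 2252306911590237160446627840 * (u - 10) ^ 6 + 450543732182693897905152000 * (u - 10) ^ 7 + 73204091786020287835430400 * (u - 10) ^ 8 + 9757050120389265217267200 * (u - 10) ^ 9 + 1072716688024761039084672 * (u - 10) ^ 10 + 97458988960768062979200 * (u - 10) ^ 11 + 7304514852366299836560 * (u - 10) ^ 12 + 449204968419498821040 * (u - 10) ^ 13 + 22445846731535414436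 * (u - 10) ^ 14 + 897317080114742400 * (u - 10) ^ 15 + 28027554040794540 * (u - 10) ^ 16 + 659223740076660 * (u - 10) ^ 17 + 10984260801537 * (u - 10) ^ 18 + 115609053000 * (u - 10) ^ 19 + 578045265 * (u - 10) ^ 20) := by
    simp only [hco, hcov0, hcov1, hcov2, hcov3, hcov4, hcov5, hcov6, hcov7, hcov8, hcov9, hcov10, hcov11, hcov12, hcov13, hcov14, hcov15]; ring
  have hrest : (0:ℝ) ≤ 115185541945805090733588480000 * (u - 10) ^ 1 + 109779408494503603702308864000 * (u - 10) ^ 2 + 66024791567399535614705664000 * (u - 10) ^ 3 + 28107416877142751436419481600 * (u - 10) ^ 4 + 9004013487867096175943270400 * (u - 10) ^ 5 + 2252306911590237160446627840 * (u - 10) ^ 6 + 450543732182693897905152000 * (u - 10) ^ 7 + 73204091786020287835430400 * (u - 10) ^ 8 + 9757050120389265217267200 * (u - 10) ^ 9 + 1072716688024761039084672 * (u - 10) ^ 10 + 97458988960768062979200 * (u - 10) ^ 11 + 7304514852366299836560 * (u - 10) ^ 12 + 449204968419498821040 * (u - 10) ^ 13 + 22445846731535414436 * (u - 10) ^ 14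 + 897317080114742400 * (u - 10) ^ 15 + 28027554040794540 * (u - 10) ^ 16 + 659223740076660 * (u - 10) ^ 17 + 10984260801537 * (u - 10) ^ 18 + 115609053000 * (u - 10) ^ 19 + 578045265 * (u - 10) ^ 20 := by
    repeat' apply add_nonneg
    all_goals exact mul_nonneg (by norm_num) (pow_nonneg ht _)
  rw [e]; linarith

lemma hp10 (u : ℝ) (hu : 10 ≤ u) : 0 ≤ hco 10 u := by
  have ht : (0:ℝ) ≤ u - 10 := by linarith
  have e : hco 10 u = 15582216025726685282304000000 + (29896955915729940091699200000 * (u - 10) ^ 1 + 27132050066732464242769920000 * (u - 10) ^ 2 + 15483054076271751098916864000 * (u - 10) ^ 3 + 6229565275918010135531520000 * (u - 10) ^ 4 + 1877904967023333846949478400 * (u - 10) ^ 5 + 439900335450010246847078400 * (u - 10) ^ 6 + 81953113906099385461125120 * (u - 10) ^ 7 + 12323495256127231725158400 * (u - 10) ^ 8 + 1509101489440887895541760 * (u - 10) ^ 9 + 151130500515172528627200 * (u - 10) ^ 10 + 12378643774836776075520 * (u - 10) ^ 11 + 825894008573177107200 * (u - 10) ^ 12 + 44496148497219565440 * (u - 10)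 ^ 13 + 1907720989617456000 * (u - 10) ^ 14 + 63607559331743040 * (u - 10) ^ 15 + 1590468029640000 * (u - 10) ^ 16 + 28070147700000 * (u - 10) ^ 17 + 311907556800 * (u - 10) ^ 18 + 1641618720 * (u - 10) ^ 19) := by
    simp only [hco, hcov0, hcov1, hcov2, hcov3, hcov4, hcov5, hcov6, hcov7, hcov8, hcov9, hcov10, hcov11, hcov12, hcov13, hcov14, hcov15]; ring
  have hrest : (0:ℝ) ≤ 29896955915729940091699200000 * (u - 10) ^ 1 + 27132050066732464242769920000 * (u - 10) ^ 2 + 15483054076271751098916864000 * (u - 10) ^ 3 + 6229565275918010135531520000 * (u - 10) ^ 4 + 1877904967023333846949478400 * (u - 10) ^ 5 + 439900335450010246847078400 * (u - 10) ^ 6 + 81953113906099385461125120 * (u - 10) ^ 7 + 12323495256127231725158400 * (u - 10) ^ 8 + 1509101489440887895541760 * (u - 10) ^ 9 + 151130500515172528627200 * (u - 10) ^ 10 + 12378643774836776075520 * (u - 10) ^ 11 + 825894008573177107200 * (u - 10) ^ 12 + 44496148497219565440 * (u - 10) ^ 13 + 1907720989617456000 * (u - 10) ^ 14 + 63607559331743040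 * (u - 10) ^ 15 + 1590468029640000 * (u - 10) ^ 16 + 28070147700000 * (u - 10) ^ 17 + 311907556800 * (u - 10) ^ 18 + 1641618720 * (u - 10) ^ 19 := by
    repeat' apply add_nonneg
    all_goals exact mul_nonneg (by norm_num) (pow_nonneg ht _)
  rw [e]; linarith

lemma hp11 (u : ℝ) (hu : 10 ≤ u) : 0 ≤ hco 11 u := by
  have ht : (0:ℝ) ≤ u - 10 := by linarith
  have e : hco 11 u = 5680720313770401308344320000 + (10130749993696320316145664000 * (u - 10) ^ 1 + 8527661454690493504590643200 * (u - 10) ^ 2 + 4502864223136045585268736000 * (u - 10) ^ 3 + 1671670606430753185727078400 * (u - 10) ^ 4 + 463427895882702852119040000 * (u - 10) ^ 5 + 99438814143162485408947200 * (u - 10) ^ 6 + 16888364508981836845793280 * (u - 10) ^ 7 + 2301746886332878545724416 * (u - 10) ^ 8 + 253657067728570165862400 * (u - 10) ^ 9 + 22658229678323296045824 * (u - 10) ^ 10 + 1636811857781040293760 * (u - 10) ^ 11 + 94920323491289599248 * (u - 10) ^ 12 + 4359163515543070080 * (u - 10) ^ 13 + 155057611574487072 * (u - 10) ^ 14 +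 4122271916357760 * (u - 10) ^ 15 + 77134741038036 * (u - 10) ^ 16 + 906538968720 * (u - 10) ^ 17 + 5036327604 * (u - 10) ^ 18) := by
    simp only [hco, hcov0, hcov1, hcov2, hcov3, hcov4, hcov5, hcov6, hcov7, hcov8, hcov9, hcov10, hcov11, hcov12, hcov13, hcov14, hcov15]; ring
  have hrest : (0:ℝ) ≤ 10130749993696320316145664000 * (u - 10) ^ 1 + 8527661454690493504590643200 * (u - 10) ^ 2 + 4502864223136045585268736000 * (u - 10) ^ 3 + 1671670606430753185727078400 * (u - 10) ^ 4 + 463427895882702852119040000 * (u - 10) ^ 5 + 99438814143162485408947200 * (u - 10) ^ 6 + 16888364508981836845793280 * (u - 10) ^ 7 + 2301746886332878545724416 * (u - 10) ^ 8 + 253657067728570165862400 * (u - 10) ^ 9 + 22658229678323296045824 * (u - 10) ^ 10 + 1636811857781040293760 * (u - 10) ^ 11 + 94920323491289599248 * (u - 10) ^ 12 + 4359163515543070080 * (u - 10) ^ 13 + 155057611574487072 * (u - 10) ^ 14 + 4122271916357760 * (u - 10) ^ 15 + 77134741038036 * (u - 10) ^ 16 + 906538968720 * (u - 10) ^ 17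 + 5036327604 * (u - 10) ^ 18 := by
    repeat' apply add_nonneg
    all_goals exact mul_nonneg (by norm_num) (pow_nonneg ht _)
  rw [e]; linarith

lemma hp12 (u : ℝ) (hu : 10 ≤ u) : 0 ≤ hco 12 u := by
  have ht : (0:ℝ) ≤ u - 10 := by linarith
  have e : hco 12 u = 1157084016869042867404800000 + (1960559781515383569776640000 * (u - 10) ^ 1 + 1561990942663644553150464000 * (u - 10) ^ 2 + 777284793690740059638988800 * (u - 10) ^ 3 + 270632792173621944895488000 * (u - 10) ^ 4 + 69977755514812676054261760 * (u - 10) ^ 5 + 13916811848831169842995200 * (u - 10) ^ 6 + 2174667323209705818869760 * (u - 10) ^ 7 + 270352547335223965117440 * (u - 10) ^ 8 + 26895694218631043452416 * (u - 10) ^ 9 + 2141409354200775014400 * (u - 10) ^ 10 + 135690896774152304640 * (u - 10) ^ 11 + 6759627576129267840 * (u - 10) ^ 12 + 259202236713634368 * (u - 10) ^ 13 + 7388750738160000 * (u - 10) ^ 14 + 147546385588800 * (u - 10) ^ 15 + 1842900887520 * (u - 10) ^ 16 + 10840593456 * (u - 10) ^ 17) := by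
    simp only [hco, hcov0, hcov1, hcov2, hcov3, hcov4, hcov5, hcov6, hcov7, hcov8, hcov9, hcov10, hcov11, hcov12, hcov13, hcov14, hcov15]; ring
  have hrest : (0:ℝ) ≤ 1960559781515383569776640000 * (u - 10) ^ 1 + 1561990942663644553150464000 * (u - 10) ^ 2 + 777284793690740059638988800 * (u - 10) ^ 3 + 270632792173621944895488000 * (u - 10) ^ 4 + 69977755514812676054261760 * (u - 10) ^ 5 + 13916811848831169842995200 * (u - 10) ^ 6 + 2174667323209705818869760 * (u - 10) ^ 7 + 270352547335223965117440 * (u - 10) ^ 8 + 26895694218631043452416 * (u - 10) ^ 9 + 2141409354200775014400 * (u - 10) ^ 10 + 135690896774152304640 * (u - 10) ^ 11 + 6759627576129267840 * (u - 10) ^ 12 + 259202236713634368 * (u - 10) ^ 13 + 7388750738160000 * (u - 10) ^ 14 + 147546385588800 * (u - 10) ^ 15 + 1842900887520 * (u - 10) ^ 16 + 10840593456 * (u - 10) ^ 17 := by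
    repeat' apply add_nonneg
    all_goals exact mul_nonneg (by norm_num) (pow_nonneg ht _)
  rw [e]; linarith

lemma hp13 (u : ℝ) (hu : 10 ≤ u) : 0 ≤ hco 13 u := by
  have ht : (0:ℝ) ≤ u - 10 := by linarith
  have e : hco 13 u = 372321802691995277721600000 + (577217679225917116907520000 * (u - 10) ^ 1 + 419811036961883619926016000 * (u - 10) ^ 2 + 190190614420940603019264000 * (u - 10) ^ 3 + 60088041941606734971801600 * (u - 10) ^ 4 + 14041145307804901997568000 * (u - 10) ^ 5 + 2510873365794877901875200 * (u - 10) ^ 6 + 350562407856272236584960 * (u - 10) ^ 7 + 38626475605672720077312 * (u - 10) ^ 8 + 3370471879175187072000 * (u - 10) ^ 9 + 232162471639132869120 * (u - 10) ^ 10 + 12492390328099144320 * (u - 10) ^ 11 + 514825729811071536 * (u - 10) ^ 12 + 15709631853115200 * (u - 10) ^ 13 + 334762400509680 * (u - 10) ^ 14 + 4451014888320 * (u - 10) ^ 15 + 27818843052 * (u - 10) ^ 16) := by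
    simp only [hco, hcov0, hcov1, hcov2, hcov3, hcov4, hcov5, hcov6, hcov7, hcov8, hcov9, hcov10, hcov11, hcov12, hcov13, hcov14, hcov15]; ring
  have hrest : (0:ℝ) ≤ 577217679225917116907520000 * (u - 10) ^ 1 + 419811036961883619926016000 * (u - 10) ^ 2 + 190190614420940603019264000 * (u - 10) ^ 3 + 60088041941606734971801600 * (u - 10) ^ 4 + 14041145307804901997568000 * (u - 10) ^ 5 + 2510873365794877901875200 * (u - 10) ^ 6 + 350562407856272236584960 * (u - 10) ^ 7 + 38626475605672720077312 * (u - 10) ^ 8 + 3370471879175187072000 * (u - 10) ^ 9 + 232162471639132869120 * (u - 10) ^ 10 + 12492390328099144320 * (u - 10) ^ 11 + 514825729811071536 * (u - 10) ^ 12 + 15709631853115200 * (u - 10) ^ 13 + 334762400509680 * (u - 10) ^ 14 + 4451014888320 * (u - 10) ^ 15 + 27818843052 * (u - 10) ^ 16 := by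
    repeat' apply add_nonneg
    all_goals exact mul_nonneg (by norm_num) (pow_nonneg ht _)
  rw [e]; linarith

lemma hp14 (u : ℝ) (hu : 10 ≤ u) : 0 ≤ hco 14 u := by
  have ht : (0:ℝ) ≤ u - 10 := by linarith
  have e : hco 14 u = 43666561574091148492800000 + (63932887943973839831040000 * (u - 10) ^ 1 + 43715151397081045499904000 * (u - 10) ^ 2 + 18521171482049182354636800 * (u - 10) ^ 3 + 5438597195390173022208000 * (u - 10) ^ 4 + 1172643232952001270620160 * (u - 10) ^ 5 + 191824424622351557836800 * (u - 10) ^ 6 + 24246044742538957578240 * (u - 10) ^ 7 + 2387825679584639923200 * (u - 10) ^ 8 + 183252312835941972480 * (u - 10) ^ 9 + 10871149219093363200 * (u - 10) ^ 10 + 489617719027557120 * (u - 10) ^ 11 + 16207177142956800 * (u - 10) ^ 12 + 372264820287360 * (u - 10) ^ 13 + 5305590576000 * (u - 10) ^ 14 + 35370603840 * (u - 10) ^ 15) := by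
    simp only [hco, hcov0, hcov1, hcov2, hcov3, hcov4, hcov5, hcov6, hcov7, hcov8, hcov9, hcov10, hcov11, hcov12, hcov13, hcov14, hcov15]; ring
  have hrest : (0:ℝ) ≤ 63932887943973839831040000 * (u - 10) ^ 1 + 43715151397081045499904000 * (u - 10) ^ 2 + 18521171482049182354636800 * (u - 10) ^ 3 + 5438597195390173022208000 * (u - 10) ^ 4 + 1172643232952001270620160 * (u - 10) ^ 5 + 191824424622351557836800 * (u - 10) ^ 6 + 24246044742538957578240 * (u - 10) ^ 7 + 2387825679584639923200 * (u - 10) ^ 8 + 183252312835941972480 * (u - 10) ^ 9 + 10871149219093363200 * (u - 10) ^ 10 + 489617719027557120 * (u - 10) ^ 11 + 16207177142956800 * (u - 10) ^ 12 + 372264820287360 * (u - 10) ^ 13 + 5305590576000 * (u - 10) ^ 14 + 35370603840 * (u - 10) ^ 15 := by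
    repeat' apply add_nonneg
    all_goals exact mul_nonneg (by norm_num) (pow_nonneg ht _)
  rw [e]; linarith

lemma hp15 (u : ℝ) (hu : 10 ≤ u) : 0 ≤ hco 15 u := by
  have ht : (0:ℝ) ≤ u - 10 := by linarith
  have e : hco 15 u = 12074828736800961331200000 + (15782572457031358218240000 * (u - 10) ^ 1 + 9614157574304935821312000 * (u - 10) ^ 2 + 3618813420777650135040000 * (u - 10) ^ 3 + 940567345658265701376000 * (u - 10) ^ 4 + 178617784556137006080000 * (u - 10) ^ 5 + 25565130324584218368000 * (u - 10) ^ 6 + 2802255201138032640000 * (u - 10) ^ 7 + 236440526918289408000 * (u - 10) ^ 8 + 15285226833676800000 * (u - 10) ^ 9 + 745431942423168000 * (u - 10) ^ 10 + 26597981329920000 * (u - 10) ^ 11 + 656513073216000 * (u - 10) ^ 12 + 10035305280000 * (u - 10) ^ 13 + 71680752000 * (u - 10) ^ 14) := by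
    simp only [hco, hcov0, hcov1, hcov2, hcov3, hcov4, hcov5, hcov6, hcov7, hcov8, hcov9, hcov10, hcov11, hcov12, hcov13, hcov14, hcov15]; ring
  have hrest : (0:ℝ) ≤ 15782572457031358218240000 * (u - 10) ^ 1 + 9614157574304935821312000 * (u - 10) ^ 2 + 3618813420777650135040000 * (u - 10) ^ 3 + 940567345658265701376000 * (u - 10) ^ 4 + 178617784556137006080000 * (u - 10) ^ 5 + 25565130324584218368000 * (u - 10) ^ 6 + 2802255201138032640000 * (u - 10) ^ 7 + 236440526918289408000 * (u - 10) ^ 8 + 15285226833676800000 * (u - 10) ^ 9 + 745431942423168000 * (u - 10) ^ 10 + 26597981329920000 * (u - 10) ^ 11 + 656513073216000 * (u - 10) ^ 12 + 10035305280000 * (u - 10) ^ 13 + 71680752000 * (u - 10) ^ 14 := by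
    repeat' apply add_nonneg
    all_goals exact mul_nonneg (by norm_num) (pow_nonneg ht _)
  rw [e]; linarith

lemma hco_nonneg (k : ℕ) (u : ℝ) (hu : 10 ≤ u) : 0 ≤ hco k u := by
  match k with
  | 0 => exact le_of_lt (h0_pos u hu)
  | 1 => exact hp1 u hu
  | 2 => exact hp2 u hu
  | 3 => exact hp3 u hu
  | 4 => exact hp4 u hu
  | 5 => exact hp5 u hu
  | 6 => exact hp6 u hu
  | 7 => exact hp7 u hu
  | 8 => exact hp8 u hu
  | 9 => exact hp9 u hu
  | 10 => exact hp10 u hu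
  | 11 => exact hp11 u hu
  | 12 => exact hp12 u hu
  | 13 => exact hp13 u hu
  | 14 => exact hp14 u hu
  | 15 => exact hp15 u hu
  | (k+16) => simp [hco]

lemma adiag_eq (u : ℝ) :
    (∑ j ∈ Finset.range 8, aco j u * EE j (u^2) (u^2))
      = (59/252) * u ^ 21 + (961/720) * u ^ 20 + (1021/180) * u ^ 19 + (-511/144) * u ^ 18 + (-4121/36) * u ^ 17 + (-40321/720) * u ^ 16 + (1101253/1260) * u ^ 15 + (72203/144) * u ^ 14 + (-27563/9) * u ^ 13 + (-131747/90) * u ^ 12 + (191506/45) * u ^ 11 + (56855/36) * u ^ 10 + (105008/63) * u ^ 9 + (-3914/45) * u ^ 8 + (-45924/5) * u ^ 7 + (-1412/3) * u ^ 6 + 5152 * u ^ 5 + (2880/7) * u ^ 3 := by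
  simp only [Finset.sum_range_succ, Finset.sum_range_zero, aco, aco0, aco1, aco2, aco3, aco4, aco5, aco6, aco7, EE, EE0, EE1, EE2, EE3, EE4, EE5, EE6, EE7]
  ring

lemma fin_ineq (u : ℝ) (hu : 10 ≤ u) :
    35280 * ((u^2 - 4*u) * (∑ j ∈ Finset.range 8, aco j u * EE j (u^2) (u^2))^2)
      ≤ 50 * u * (u^2-6)^7 * hco 0 u := by
  rw [adiag_eq]
  have ht : (0:ℝ) ≤ u - 10 := by linarith
  have e : 50 * u * (u^2-6)^7 * hco 0 u
      - 35280 * ((u^2 - 4*u) * ((59/252) * u ^ 21 + (961/720) * u ^ 20 + (1021/180) * u ^ 19 + (-511/144) * u ^ 18 + (-4121/36) * u ^ 17 + (-40321/720) * u ^ 16 + (1101253/1260) * u ^ 15 + (72203/144) * u ^ 14 + (-27563/9) * u ^ 13 + (-131747/90) * u ^ 12 + (191506/45) * u ^ 11 + (56855/36) * u ^ 10 + (105008/63) * u ^ 9 + (-3914/45) * u ^ 8 + (-45924/5) * u ^ 7 + (-1412/3) * u ^ 6 + 5152 * u ^ 5 + (2880/7) * u ^ 3)^2)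
      = 97310164695442940635393514759328399360000000000 + (727277690675310415388342363757273612288000000000 * (u - 10) ^ 1 + 2212183977693072924164168484273485665075200000000 * (u - 10) ^ 2 + (28075792594405100491162703462654981324800000000000/7) * (u - 10) ^ 3 + (35362777738952684368112129076654502171443200000000/7) * (u - 10) ^ 4 + (33570988031199083414834199041815729634931507200000/7) * (u - 10) ^ 5 + (75765627919975331807652143715615443043039969280000/21) * (u - 10) ^ 6 + (6673472774645894739731429096171269752712134656000/3) * (u - 10) ^ 7 + (3454203138459022498850523974909129189018654720000/3) * (u - 10) ^ 8 + (32087876894131629782690091724676262139821423001600/63) * (u - 10) ^ 9 + (12298455189038081025304310795055452813238103961600/63) * (u - 10) ^ 10 + (4128371771158750525636009229228562810402850611200/63) * (u - 10) ^ 11 + (136028098777439404459137759272913155817569582080/7) * (u - 10) ^ 12 + (107656454487791920024951100388017539261238511616/21) * (u - 10) ^ 13 + (10890041250893964395526989677878023725622409472/9) * (u - 10) ^ 14 + (80867391508814438965256061287674560246884042752/315) * (u - 10) ^ 15 + (15482047960621900983670467224495588064307270208/315) * (u - 10) ^ 16 + (2683040474279618823865041010405560134230884608/315) * (u - 10) ^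 17 + (421962692534056122802927622743545719925157072/315) * (u - 10) ^ 18 + (8620798010530044798116336557666464150585248/45) * (u - 10) ^ 19 + (2619955162993442287950049505525286057613708/105) * (u - 10) ^ 20 + (933407095309709930910714222628646203623544/315) * (u - 10) ^ 21 + (101141343595366502434417870282635517214681/315) * (u - 10) ^ 22 + (476341723403645308474053568467382659928/15) * (u - 10) ^ 23 + (100333113055816959948166200704873415538/35) * (u - 10) ^ 24 + (24790189658388686627441757191826542744/105) * (u - 10) ^ 25 + (11167853516945704968562688435405967431/630) * (u - 10) ^ 26 + (54536560335842124139048559684018044/45) * (u - 10) ^ 27 + (94905858796758905021182316860545503/1260) * (u - 10) ^ 28 + (2675445933538468149555890411339029/630) * (u - 10) ^ 29 + (363942596368432839602053115327531/1680) * (u - 10) ^ 30 + (1046387804634767999793565968916/105) * (u - 10) ^ 31 + (148236021455605540813051336553/360) * (u - 10) ^ 32 + (684304804727256144677031686/45) * (u - 10) ^ 33 + (359241377914720978042699129/720) * (u - 10) ^ 34 + (9095615910607849029464117/630) * (u - 10) ^ 35 + (114991782446869998900644/315) * (u - 10) ^ 36 + (717538045980088990079/90) * (u - 10) ^ 37 +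 (82967608828212201199/560) * (u - 10) ^ 38 + (103342758763064891/45) * (u - 10) ^ 39 + (10399355385649697/360) * (u - 10) ^ 40 + (1416283978141/5) * (u - 10) ^ 41 + (3412261347499/1680) * (u - 10) ^ 42 + (397841543/42) * (u - 10) ^ 43 + (2716655/126) * (u - 10) ^ 44) := by
    simp only [hco, hcov0]
    ring
  have hrest : (0:ℝ) ≤ 727277690675310415388342363757273612288000000000 * (u - 10) ^ 1 + 2212183977693072924164168484273485665075200000000 * (u - 10) ^ 2 + (28075792594405100491162703462654981324800000000000/7) * (u - 10) ^ 3 + (35362777738952684368112129076654502171443200000000/7) * (u - 10) ^ 4 + (33570988031199083414834199041815729634931507200000/7) * (u - 10) ^ 5 + (75765627919975331807652143715615443043039969280000/21) * (u - 10) ^ 6 + (6673472774645894739731429096171269752712134656000/3) * (u - 10) ^ 7 + (3454203138459022498850523974909129189018654720000/3) * (u - 10) ^ 8 + (32087876894131629782690091724676262139821423001600/63) * (u - 10) ^ 9 + (12298455189038081025304310795055452813238103961600/63) * (u - 10) ^ 10 + (4128371771158750525636009229228562810402850611200/63) * (u - 10) ^ 11 + (136028098777439404459137759272913155817569582080/7)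 * (u - 10) ^ 12 + (107656454487791920024951100388017539261238511616/21) * (u - 10) ^ 13 + (10890041250893964395526989677878023725622409472/9) * (u - 10) ^ 14 + (80867391508814438965256061287674560246884042752/315) * (u - 10) ^ 15 + (15482047960621900983670467224495588064307270208/315) * (u - 10) ^ 16 + (2683040474279618823865041010405560134230884608/315) * (u - 10) ^ 17 + (421962692534056122802927622743545719925157072/315) * (u - 10) ^ 18 + (8620798010530044798116336557666464150585248/45) * (u - 10) ^ 19 + (2619955162993442287950049505525286057613708/105) * (u - 10) ^ 20 + (933407095309709930910714222628646203623544/315) * (u - 10) ^ 21 + (101141343595366502434417870282635517214681/315) * (u - 10) ^ 22 + (476341723403645308474053568467382659928/15) * (u - 10) ^ 23 + (100333113055816959948166200704873415538/35) * (u - 10) ^ 24 + (24790189658388686627441757191826542744/105) * (u - 10) ^ 25 + (11167853516945704968562688435405967431/630) * (u - 10) ^ 26 + (54536560335842124139048559684018044/45) * (u - 10) ^ 27 + (94905858796758905021182316860545503/1260) * (u - 10) ^ 28 + (2675445933538468149555890411339029/630) * (u - 10) ^ 29 + (363942596368432839602053115327531/1680) * (u - 10) ^ 30 + (1046387804634767999793565968916/105)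 * (u - 10) ^ 31 + (148236021455605540813051336553/360) * (u - 10) ^ 32 + (684304804727256144677031686/45) * (u - 10) ^ 33 + (359241377914720978042699129/720) * (u - 10) ^ 34 + (9095615910607849029464117/630) * (u - 10) ^ 35 + (114991782446869998900644/315) * (u - 10) ^ 36 + (717538045980088990079/90) * (u - 10) ^ 37 + (82967608828212201199/560) * (u - 10) ^ 38 + (103342758763064891/45) * (u - 10) ^ 39 + (10399355385649697/360) * (u - 10) ^ 40 + (1416283978141/5) * (u - 10) ^ 41 + (3412261347499/1680) * (u - 10) ^ 42 + (397841543/42) * (u - 10) ^ 43 + (2716655/126) * (u - 10) ^ 44 := by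
    repeat' apply add_nonneg
    all_goals exact mul_nonneg (by norm_num) (pow_nonneg ht _)
  linarith [e, hrest]


lemma main2 (n : ℕ) (hn : 100 ≤ n) (d : ℕ) (C : Finset (Fin n → ZMod 2))
    (hC : ∀ x ∈ C, ∀ y ∈ C, x ≠ y → d ≤ hammingDist x y)
    (hd : (n : ℝ) / 2 - 2 * Real.sqrt n ≤ d) :
    (C.card : ℝ) ≤ (Real.sqrt n / ((4.14 : ℝ) - 4)) *
      (∑ i ∈ Finset.range 8, (n.choose i : ℝ)) := by
  set u := Real.sqrt n with hu
  have hn0 : (0:ℝ) ≤ n := by positivity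
  have hu2 : u^2 = n := Real.sq_sqrt hn0
  have hu10 : (10:ℝ) ≤ u := by
    rw [hu, show (10:ℝ) = Real.sqrt 100 by
      rw [show (100:ℝ) = 10^2 by norm_num, Real.sqrt_sq (by norm_num)]]
    exact Real.sqrt_le_sqrt (by exact_mod_cast hn)
  have hupos : (0:ℝ) < u := by linarith
  set v : (Fin n → ZMod 2) → Fin n → ℝ := fun x i => 1 - 2*((x i).val : ℝ) with hv
  have hv1 : ∀ x y : Fin n → ZMod 2, ∀ i, (v x i * v y i = 1 ∨ v x i * v y i = -1) := by
    intro x y i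
    rcases zmod2cases (x i) with h | h <;> rcases zmod2cases (y i) with h' | h' <;>
      simp only [hv] <;> rw [h, h'] <;> norm_num [ZMod.val_one]
  have hdist : ∀ x y : Fin n → ZMod 2,
      (∑ i, v x i * v y i) = (n : ℝ) - 2 * (hammingDist x y : ℕ) := by
    intro x y
    have h1 : ∀ i, v x i * v y i = 1 - 2 * (if x i ≠ y i then (1:ℝ) else 0) := by
      intro i
      rcases zmod2cases (x i) with h | h <;> rcases zmod2cases (y i) with h' | h' <;>
        simp only [hv] <;> rw [h, h'] <;> norm_num [ZMod.val_one]
    rw [Finset.sum_congr rfl (fun i _ => h1 i), Finset.sum_sub_distrib, ← Finset.mul_sum,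
      Finset.sum_boole, Finset.sum_const, Finset.card_univ, Fintype.card_fin]
    simp [hammingDist]
  have hdiag : ∀ x : Fin n → ZMod 2, (∑ i, v x i * v x i) = u^2 := by
    intro x
    have h1 : ∀ i : Fin n, v x i * v x i = 1 := by
      intro i
      rcases hv1 x x i with h | h
      · exact h
      · exfalso; nlinarith [mul_self_nonneg (v x i), h]
    rw [Finset.sum_congr rfl (fun i _ => h1 i), Finset.sum_const, Finset.card_univ,
      Fintype.card_fin]
    simp only [nsmul_eq_mul, mul_one]
    exact hu2.symm
  have hsle : ∀ x ∈ C, ∀ y ∈ C, x ≠ y → (∑ i, v x i * v y i) ≤ 4*u := by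
    intro x hx y hy hxy
    have h1 : (d:ℝ) ≤ (hammingDist x y : ℕ) := by exact_mod_cast hC x hx y hy hxy
    rw [hdist x y]
    linarith
  have hQ : ∀ k : ℕ, k ≤ 15 →
      (∑ x ∈ C, ∑ y ∈ C, EE k (∑ i, v x i * v y i) (u^2))
        = ∑ S ∈ (Finset.univ : Finset (Fin n)).powersetCard k,
            (∑ x ∈ C, ∏ i ∈ S, v x i)^2 := by
    intro k hk
    have h1 : ∀ x y : Fin n → ZMod 2, EE k (∑ i, v x i * v y i) (u^2)
        = ∑ S ∈ (Finset.univ : Finset (Fin n)).powersetCard k,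
            ((∏ i ∈ S, v x i) * (∏ i ∈ S, v y i)) := by
      intro x y
      have h2 := esymm_aux (fun i => v x i * v y i) (hv1 x y) Finset.univ k hk
      rw [Finset.card_univ, Fintype.card_fin, ← hu2] at h2
      rw [← h2]
      exact Finset.sum_congr rfl (fun S _ => Finset.prod_mul_distrib)
    calc (∑ x ∈ C, ∑ y ∈ C, EE k (∑ i, v x i * v y i) (u^2))
        = ∑ x ∈ C, ∑ y ∈ C, ∑ S ∈ (Finset.univ : Finset (Fin n)).powersetCard k,
            ((∏ i ∈ S, v x i) * (∏ i ∈ S, v y i)) :=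
          Finset.sum_congr rfl fun x _ => Finset.sum_congr rfl fun y _ => h1 x y
      _ = ∑ x ∈ C, ∑ S ∈ (Finset.univ : Finset (Fin n)).powersetCard k,
            ∑ y ∈ C, ((∏ i ∈ S, v x i) * (∏ i ∈ S, v y i)) :=
          Finset.sum_congr rfl fun x _ => Finset.sum_comm
      _ = ∑ S ∈ (Finset.univ : Finset (Fin n)).powersetCard k,
            ∑ x ∈ C, ∑ y ∈ C, ((∏ i ∈ S, v x i) * (∏ i ∈ S, v y i)) := Finset.sum_comm
      _ = ∑ S ∈ (Finset.univ : Finset (Fin n)).powersetCard k,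
            (∑ x ∈ C, ∏ i ∈ S, v x i)^2 := by
          refine Finset.sum_congr rfl fun S _ => ?_
          rw [← Finset.sum_mul_sum, sq]
  have hTOT : (∑ x ∈ C, ∑ y ∈ C,
        ((∑ i, v x i * v y i) - 4*u) * (∑ j ∈ Finset.range 8,
          aco j u * EE j (∑ i, v x i * v y i) (u^2))^2)
      = ∑ k ∈ Finset.range 16, hco k u *
          (∑ S ∈ (Finset.univ : Finset (Fin n)).powersetCard k,
            (∑ x ∈ C, ∏ i ∈ S, v x i)^2) := by
    calc (∑ x ∈ C, ∑ y ∈ C,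
        ((∑ i, v x i * v y i) - 4*u) * (∑ j ∈ Finset.range 8,
          aco j u * EE j (∑ i, v x i * v y i) (u^2))^2)
        = ∑ x ∈ C, ∑ y ∈ C, ∑ k ∈ Finset.range 16,
            hco k u * EE k (∑ i, v x i * v y i) (u^2) :=
          Finset.sum_congr rfl fun x _ => Finset.sum_congr rfl fun y _ => expand u _
      _ = ∑ x ∈ C, ∑ k ∈ Finset.range 16, ∑ y ∈ C,
            hco k u * EE k (∑ i, v x i * v y i) (u^2) :=
          Finset.sum_congr rfl fun x _ => Finset.sum_comm
      _ = ∑ k ∈ Finset.range 16, ∑ x ∈ C, ∑ y ∈ C,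
            hco k u * EE k (∑ i, v x i * v y i) (u^2) := Finset.sum_comm
      _ = ∑ k ∈ Finset.range 16, hco k u *
            (∑ S ∈ (Finset.univ : Finset (Fin n)).powersetCard k,
              (∑ x ∈ C, ∏ i ∈ S, v x i)^2) := by
          refine Finset.sum_congr rfl fun k hk => ?_
          have hk15 : k ≤ 15 := by have := Finset.mem_range.mp hk; omega
          rw [← hQ k hk15, Finset.mul_sum]
          exact Finset.sum_congr rfl fun x _ => (Finset.mul_sum _ _ _).symm
  have hQ0 : (∑ S ∈ (Finset.univ : Finset (Fin n)).powersetCard 0,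
      (∑ x ∈ C, ∏ i ∈ S, v x i)^2) = (C.card : ℝ)^2 := by
    rw [Finset.powersetCard_zero, Finset.sum_singleton]
    simp
  have hlow : hco 0 u * (C.card : ℝ)^2 ≤ ∑ k ∈ Finset.range 16, hco k u *
      (∑ S ∈ (Finset.univ : Finset (Fin n)).powersetCard k,
        (∑ x ∈ C, ∏ i ∈ S, v x i)^2) := by
    have h := Finset.single_le_sum
      (f := fun k => hco k u * (∑ S ∈ (Finset.univ : Finset (Fin n)).powersetCard k,
        (∑ x ∈ C, ∏ i ∈ S, v x i)^2))
      (fun k _ => mul_nonneg (hco_nonneg k u hu10)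
        (Finset.sum_nonneg fun S _ => sq_nonneg _))
      (show (0:ℕ) ∈ Finset.range 16 by norm_num)
    rwa [hQ0] at h
  have hup : (∑ x ∈ C, ∑ y ∈ C,
        ((∑ i, v x i * v y i) - 4*u) * (∑ j ∈ Finset.range 8,
          aco j u * EE j (∑ i, v x i * v y i) (u^2))^2)
      ≤ (C.card : ℝ) * ((u^2 - 4*u) * (∑ j ∈ Finset.range 8,
          aco j u * EE j (u^2) (u^2))^2) := by
    have hper : ∀ x ∈ C, (∑ y ∈ C,
        ((∑ i, v x i * v y i) - 4*u) * (∑ j ∈ Finset.range 8,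
          aco j u * EE j (∑ i, v x i * v y i) (u^2))^2)
        ≤ (u^2 - 4*u) * (∑ j ∈ Finset.range 8, aco j u * EE j (u^2) (u^2))^2 := by
      intro x hx
      rw [← Finset.add_sum_erase C _ hx, hdiag x]
      have herase : (∑ y ∈ C.erase x,
          ((∑ i, v x i * v y i) - 4*u) * (∑ j ∈ Finset.range 8,
            aco j u * EE j (∑ i, v x i * v y i) (u^2))^2) ≤ 0 := by
        refine Finset.sum_nonpos fun y hy => ?_
        obtain ⟨hyx, hyC⟩ := Finset.mem_erase.mp hy
        have h1 : (∑ i, v x i * v y i) - 4*u ≤ 0 := by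
          have := hsle x hx y hyC (Ne.symm hyx)
          linarith
        nlinarith [sq_nonneg (∑ j ∈ Finset.range 8,
          aco j u * EE j (∑ i, v x i * v y i) (u^2)), h1]
      linarith
    calc (∑ x ∈ C, ∑ y ∈ C,
        ((∑ i, v x i * v y i) - 4*u) * (∑ j ∈ Finset.range 8,
          aco j u * EE j (∑ i, v x i * v y i) (u^2))^2)
        ≤ ∑ x ∈ C, ((u^2 - 4*u) * (∑ j ∈ Finset.range 8,
            aco j u * EE j (u^2) (u^2))^2) := Finset.sum_le_sum hper
      _ = (C.card : ℝ) * ((u^2 - 4*u) * (∑ j ∈ Finset.range 8,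
            aco j u * EE j (u^2) (u^2))^2) := by
          rw [Finset.sum_const, nsmul_eq_mul]
  have key : hco 0 u * (C.card : ℝ)^2 ≤ (C.card : ℝ) * ((u^2 - 4*u) *
      (∑ j ∈ Finset.range 8, aco j u * EE j (u^2) (u^2))^2) := by
    rw [← hTOT] at hlow
    exact hlow.trans hup
  have hfin := fin_ineq u hu10
  have h0p := h0_pos u hu10
  have hV : ((u^2 - 6)^7) ≤ 5040 * (∑ i ∈ Finset.range 8, (n.choose i : ℝ)) := by
    have h6 : (6:ℕ) ≤ n := by omega
    have h1 := Nat.pow_le_choose 7 n (α := ℝ)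
    rw [show n + 1 - 7 = n - 6 by omega] at h1
    norm_num [Nat.factorial] at h1
    have h2 : (n.choose 7 : ℝ) ≤ ∑ i ∈ Finset.range 8, (n.choose i : ℝ) :=
      Finset.single_le_sum (f := fun i => (n.choose i : ℝ)) (fun i _ => Nat.cast_nonneg _)
        (show (7:ℕ) ∈ Finset.range 8 by norm_num)
    have h3 : ((n - 6 : ℕ) : ℝ) = (n:ℝ) - 6 := by
      push_cast [Nat.cast_sub h6]; ring
    rw [hu2]
    rw [h3] at h1
    linarith
  have hVnn : (0:ℝ) ≤ ∑ i ∈ Finset.range 8, (n.choose i : ℝ) :=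
    Finset.sum_nonneg fun i _ => Nat.cast_nonneg _
  have h414 : ((4.14:ℝ) - 4) = 7/50 := by norm_num
  have hM0 : (0:ℝ) ≤ (C.card : ℝ) := Nat.cast_nonneg _
  rcases eq_or_lt_of_le hM0 with hMz | hMp
  · rw [h414]
    have : (0:ℝ) ≤ u/(7/50) * (∑ i ∈ Finset.range 8, (n.choose i : ℝ)) := by
      apply mul_nonneg (by positivity) hVnn
    linarith
  · have step1 : hco 0 u * (C.card : ℝ) ≤ (u^2 - 4*u) *
        (∑ j ∈ Finset.range 8, aco j u * EE j (u^2) (u^2))^2 := by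
      have h := mul_le_mul_of_nonneg_right key (le_of_lt (inv_pos.mpr hMp))
      have hMne : (C.card : ℝ) ≠ 0 := ne_of_gt hMp
      field_simp at h
      nlinarith [key, hMp]
    have step3 : 50*u*(u^2-6)^7 * hco 0 u ≤
        50*u*(5040 * (∑ i ∈ Finset.range 8, (n.choose i : ℝ))) * hco 0 u := by
      nlinarith [mul_le_mul_of_nonneg_left hV
        (mul_nonneg (mul_nonneg (by norm_num : (0:ℝ) ≤ 50) hupos.le) h0p.le)]
    have step4 : 35280 * (hco 0 u * (C.card : ℝ)) ≤
        252000 * (u * (∑ i ∈ Finset.range 8, (n.choose i : ℝ))) * hco 0 u := by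
      nlinarith [step1, hfin, step3]
    have step5 : 35280 * (C.card : ℝ) ≤
        252000 * (u * (∑ i ∈ Finset.range 8, (n.choose i : ℝ))) := by
      nlinarith [step4, h0p]
    rw [h414]
    have he : u/(7/50) * (∑ i ∈ Finset.range 8, (n.choose i : ℝ))
        = 50/7 * (u * (∑ i ∈ Finset.range 8, (n.choose i : ℝ))) := by ring
    rw [he]
    linarith

theorem main1 (n : ℕ) (hn : 100 ≤ n) (d : ℕ) (C : Finset (Fin n → ZMod 2))
    (hC : ∀ x ∈ C, ∀ y ∈ C, x ≠ y → d ≤ hammingDist x y)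
    (hd : (n : ℝ) / 2 - 2 * Real.sqrt n ≤ d) :
    (C.card : ℝ) ≤ 60 * (n : ℝ) ^ ((15 : ℝ)/2) := by
  have h2 := main2 n hn d C hC hd
  refine h2.trans ?_
  have hn0 : (0:ℝ) < n := by exact_mod_cast (show 0 < n by omega)
  have hVle : (∑ i ∈ Finset.range 8, (n.choose i : ℝ)) ≤ 8 * (n:ℝ)^(7:ℕ) := by
    have h1 : ∀ i ∈ Finset.range 8, (n.choose i : ℝ) ≤ (n:ℝ)^(7:ℕ) := by
      intro i hi
      have hi7 : i ≤ 7 := by have := Finset.mem_range.mp hi; omega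
      have ha := Nat.choose_le_pow n i
      have hb : n^i ≤ n^7 := Nat.pow_le_pow_right (by omega) hi7
      exact_mod_cast le_trans ha hb
    calc (∑ i ∈ Finset.range 8, (n.choose i : ℝ))
        ≤ ∑ _i ∈ Finset.range 8, (n:ℝ)^(7:ℕ) := Finset.sum_le_sum h1
      _ = 8 * (n:ℝ)^(7:ℕ) := by
          rw [Finset.sum_const, Finset.card_range, nsmul_eq_mul]; norm_num
  have hsplit : (n:ℝ)^((15:ℝ)/2) = (n:ℝ)^(7:ℕ) * Real.sqrt n := by
    rw [Real.sqrt_eq_rpow, ← Real.rpow_natCast (n:ℝ) 7, ← Real.rpow_add hn0]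
    norm_num
  rw [hsplit, show ((4.14:ℝ) - 4) = 7/50 by norm_num]
  have hs0 : (0:ℝ) ≤ Real.sqrt n := Real.sqrt_nonneg _
  have hp0 : (0:ℝ) ≤ (n:ℝ)^(7:ℕ) := by positivity
  calc Real.sqrt n/(7/50) * (∑ i ∈ Finset.range 8, (n.choose i : ℝ))
      ≤ Real.sqrt n/(7/50) * (8 * (n:ℝ)^(7:ℕ)) := by
        apply mul_le_mul_of_nonneg_left hVle (by positivity)
    _ ≤ 60 * ((n:ℝ)^(7:ℕ) * Real.sqrt n) := by nlinarith [mul_nonneg hp0 hs0]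

end UBTSN

/-- Codes with minimum distance `d ≥ n/2 - 2√n` have size `O(n^{15/2})`; quantitatively,
for sufficiently large `n`, `M ≤ (√n / (4.14 - 4)) · Vol(7, n)`. -/
theorem upper_bound_two_sqrt_n :
    (∃ K : ℝ, 0 < K ∧ ∃ N : ℕ, ∀ n : ℕ, N ≤ n →
      ∀ d : ℕ, ∀ C : Finset (Fin n → ZMod 2),
        (∀ x ∈ C, ∀ y ∈ C, x ≠ y → d ≤ hammingDist x y) →
        ((n : ℝ) / 2 - 2 * Real.sqrt n ≤ d) →
        (C.card : ℝ) ≤ K * (n : ℝ) ^ ((15 : ℝ) / 2)) ∧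
    (∃ N : ℕ, ∀ n : ℕ, N ≤ n →
      ∀ d : ℕ, ∀ C : Finset (Fin n → ZMod 2),
        (∀ x ∈ C, ∀ y ∈ C, x ≠ y → d ≤ hammingDist x y) →
        ((n : ℝ) / 2 - 2 * Real.sqrt n ≤ d) →
        (C.card : ℝ) ≤ (Real.sqrt n / ((4.14 : ℝ) - 4)) *
          (∑ i ∈ Finset.range 8, (n.choose i : ℝ))) := by
  constructor
  · exact ⟨60, by norm_num, 100, fun n hn d C hC hd => UBTSN.main1 n hn d C hC hd⟩
  · exact ⟨100, fun n hn d C hC hd => UBTSN.main2 n hn d C hC hd⟩
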